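/- arXiv:1912.03342 — 2 statements merged into one kernel-verified Lean document; each statement's English description precedes it below -/
import Mathlib

section
/- Let κ be a regular uncountable cardinal, let Γ ⊆ κ, let vec C = ⟨C_β : β ∈ Γ⟩ be a C-sequence over Γ, let D ⊆ κ be a club, and let ν be a cardinal such that Γ ∩ E^κ_{≥ν} is stationary. If (1) otp(C_β) < ν for all β ∈ Γ \ E^κ_{≥ν}, and (2) min(C_β) ≥ sup(D ∩ β) for all nonzero β ∈ Γ \ D, then χ(vec C) = χ(vec C ↾ (D ∩ E^κ_{≥ν})). -/
noncomputable section

open Set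

namespace CSeq

/-- `#s = c`, phrased with a universe lift (sets of ordinals live in `Type 1`). -/
def MkEq {α : Type 1} (s : Set α) (c : Cardinal.{0}) : Prop :=
  Cardinal.mk s = Cardinal.lift.{1} c

def MkLe {α : Type 1} (s : Set α) (c : Cardinal.{0}) : Prop :=
  Cardinal.mk s ≤ Cardinal.lift.{1} c

def MkLt {α : Type 1} (s : Set α) (c : Cardinal.{0}) : Prop :=
  Cardinal.mk s < Cardinal.lift.{1} c

/-- The strict supremum `ssup(a)` of a set of ordinals. -/
def ssup (a : Set Ordinal.{0}) : Ordinal.{0} := sSup ((· + 1) '' a)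

/-- `acc⁺(a) = {α < ssup a | sup (a ∩ α) = α > 0}`. -/
def accPlus (a : Set Ordinal.{0}) : Set Ordinal.{0} :=
  {α | α < ssup a ∧ 0 < α ∧ sSup (a ∩ Iio α) = α}

/-- `acc(a) = a ∩ acc⁺(a)`. -/
def acc (a : Set Ordinal.{0}) : Set Ordinal.{0} := a ∩ accPlus a

/-- A set of ordinals is closed below `β`. -/
def IsClosedIn (C : Set Ordinal.{0}) (β : Ordinal.{0}) : Prop :=
  ∀ α, α < β → 0 < α → sSup (C ∩ Iio α) = α → α ∈ C

/-- A club (closed and unbounded set) in `β`. -/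
def IsClubIn (C : Set Ordinal.{0}) (β : Ordinal.{0}) : Prop :=
  C ⊆ Iio β ∧ (∀ α < β, ∃ γ ∈ C, α ≤ γ) ∧ IsClosedIn C β

/-- A stationary subset of `β`: one meeting every club in `β`. -/
def IsStationaryIn (S : Set Ordinal.{0}) (β : Ordinal.{0}) : Prop :=
  ∀ C, IsClubIn C β → (S ∩ C).Nonempty

/-- A C-sequence over a set `Γ` of ordinals. -/
def IsCSeqOn (Γ : Set Ordinal.{0}) (C : Ordinal.{0} → Set Ordinal.{0}) : Prop :=
  ∀ β ∈ Γ, C β ⊆ Iio β ∧ IsClosedIn (C β) β ∧ sSup (C β) = sSup (Iio β)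

/-- A C-sequence over `κ`. -/
def IsCSeq (κ : Ordinal.{0}) (C : Ordinal.{0} → Set Ordinal.{0}) : Prop :=
  IsCSeqOn (Iio κ) C

/-- The covering relation underlying the C-sequence number: there are `Δ ∈ [κ]^κ` and
`b : κ → [Γ]^χ` with `Δ ∩ α ⊆ ⋃_{β ∈ b α} C β` for all `α < κ`. -/
def CSeqCovers (κ : Cardinal.{0}) (Γ : Set Ordinal.{0})
    (C : Ordinal.{0} → Set Ordinal.{0}) (χ : Cardinal.{0}) : Prop :=
  ∃ (Δ : Set Ordinal.{0}) (b : Ordinal.{0} → Set Ordinal.{0}),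
    Δ ⊆ Iio κ.ord ∧ MkEq Δ κ ∧
    (∀ α < κ.ord, b α ⊆ Γ ∧ MkEq (b α) χ) ∧
    ∀ α < κ.ord, Δ ∩ Iio α ⊆ ⋃ β ∈ b α, C β

/-- `χ(vec C)` for a C-sequence over `Γ ⊆ κ`. -/
def chiOfOn (κ : Cardinal.{0}) (Γ : Set Ordinal.{0})
    (C : Ordinal.{0} → Set Ordinal.{0}) : Cardinal.{0} :=
  sInf {χ : Cardinal.{0} | χ ≤ κ ∧ CSeqCovers κ Γ C χ}

/-- `χ(vec C)` for a C-sequence over `κ`. -/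
def chiOf (κ : Cardinal.{0}) (C : Ordinal.{0} → Set Ordinal.{0}) : Cardinal.{0} :=
  chiOfOn κ (Iio κ.ord) C

/-- The C-sequence number `χ(κ)`. -/
def chiNum (κ : Cardinal.{0}) : Cardinal.{0} :=
  sInf {χ : Cardinal.{0} | χ ≤ κ ∧ ∀ C, IsCSeq κ.ord C → CSeqCovers κ (Iio κ.ord) C χ}

/-- The C-sequence spectrum of `κ`: the infinite values of `χ(vec C)`. -/
def spec (κ : Cardinal.{0}) : Set Cardinal.{0} :=
  {χ | Cardinal.aleph0 ≤ χ ∧ ∃ C, IsCSeq κ.ord C ∧ chiOf κ C = χ}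

/-- `sup (reg κ)`, the supremum of the infinite regular cardinals below `κ`. -/
def supReg (κ : Cardinal.{0}) : Cardinal.{0} :=
  sSup {ν : Cardinal.{0} | ν.IsRegular ∧ ν < κ}

/-- `acc(κ)`: the set of nonzero limit ordinals below `κ`. -/
def accOrd (κ : Ordinal.{0}) : Set Ordinal.{0} := {β | β < κ ∧ Order.IsSuccLimit β}

/-- `Tr(S)`: the set of `β < κ` of uncountable cofinality in which `S` reflects. -/
def TrSet (κ : Ordinal.{0}) (S : Set Ordinal.{0}) : Set Ordinal.{0} :=
  {β | β < κ ∧ Cardinal.aleph0 < β.cof ∧ IsStationaryIn (S ∩ Iio β) β}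

/-- The order type of a set of ordinals (as an ordinal one universe up). -/
def otp (s : Set Ordinal.{0}) : Ordinal.{1} :=
  Ordinal.type (Subrel ((· < ·) : Ordinal.{0} → Ordinal.{0} → Prop) (· ∈ s))

/-- `D^c_{≤ i}(β) = {α < β | c(α, β) ≤ i}`. -/
def DleI (c : Ordinal.{0} → Ordinal.{0} → Ordinal.{0}) (i β : Ordinal.{0}) :
    Set Ordinal.{0} :=
  {α | α < β ∧ c α β ≤ i}

/-- The coloring `c` takes pairs from `κ` to colors `< θ`. -/
def ColoringInto (κ θ : Ordinal.{0}) (c : Ordinal.{0} → Ordinal.{0} → Ordinal.{0}) : Prop :=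
  ∀ α β, α < β → β < κ → c α β < θ

/-- `S`-closedness of a coloring. -/
def IsClosedColoringOn (S : Set Ordinal.{0}) (κ θ : Ordinal.{0})
    (c : Ordinal.{0} → Ordinal.{0} → Ordinal.{0}) : Prop :=
  ∀ β < κ, ∀ i < θ, ∀ α ∈ S, α < β → 0 < α →
    sSup (DleI c i β ∩ Iio α) = α → α ∈ DleI c i β

/-- Closedness of a coloring. -/
def IsClosedColoring (κ θ : Ordinal.{0})
    (c : Ordinal.{0} → Ordinal.{0} → Ordinal.{0}) : Prop :=
  ∀ β < κ, ∀ i < θ, ∀ α, α < β → 0 < α →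
    sSup (DleI c i β ∩ Iio α) = α → α ∈ DleI c i β

/-- `c` witnesses `U(κ, μ, θ, χ)`. -/
def WitnessU (κ μ θ χ : Cardinal.{0})
    (c : Ordinal.{0} → Ordinal.{0} → Ordinal.{0}) : Prop :=
  ∀ χ' : Cardinal.{0}, χ' < χ →
    ∀ 𝒜 : Set (Set Ordinal.{0}),
      (∀ a ∈ 𝒜, a ⊆ Iio κ.ord ∧ MkEq a χ') → MkEq 𝒜 κ → 𝒜.Pairwise Disjoint →
    ∀ i, i < θ.ord →
      ∃ ℬ ⊆ 𝒜, MkEq ℬ μ ∧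
        ∀ a ∈ ℬ, ∀ b ∈ ℬ, (∀ α ∈ a, ∀ β ∈ b, α < β) →
          ∀ α ∈ a, ∀ β ∈ b, i < c α β

/-- An ultrafilter over a set `X` of ordinals, presented as a family of subsets of `X`. -/
structure IsUltrafilterOn (X : Set Ordinal.{0}) (U : Set (Set Ordinal.{0})) : Prop where
  mem_subset : ∀ A ∈ U, A ⊆ X
  univ_mem : X ∈ U
  empty_notMem : ∅ ∉ U
  mem_of_superset : ∀ A ∈ U, ∀ B, B ⊆ X → A ⊆ B → B ∈ U
  inter_mem : ∀ A ∈ U, ∀ B ∈ U, A ∩ B ∈ U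
  mem_or_compl_mem : ∀ A, A ⊆ X → A ∈ U ∨ X \ A ∈ U

/-- `δ`-completeness of an ultrafilter over `X`. -/
def IsComplete (δ : Cardinal.{0}) (X : Set Ordinal.{0})
    (U : Set (Set Ordinal.{0})) : Prop :=
  ∀ s : Set (Set Ordinal.{0}), s ⊆ U → MkLt s δ → X ∩ ⋂₀ s ∈ U

/-- Uniformity of an ultrafilter over `X`: all members have full cardinality. -/
def IsUniform (X : Set Ordinal.{0}) (U : Set (Set Ordinal.{0})) : Prop :=
  ∀ A ∈ U, Cardinal.mk A = Cardinal.mk X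

/-- Weak normality of an ultrafilter over a set of nonzero ordinals below `κ`. -/
def IsWeaklyNormal (κ : Ordinal.{0}) (X : Set Ordinal.{0})
    (U : Set (Set Ordinal.{0})) : Prop :=
  ∀ X' ∈ U, ∀ g : Ordinal.{0} → Ordinal.{0}, (∀ β ∈ X', g β < β) →
    ∃ γ < κ, {β ∈ X' | g β < γ} ∈ U

/-- A `□(κ,<ω)`-sequence. -/
def IsSquareSeqLtOmega (κ : Ordinal.{0})
    (𝒞 : Ordinal.{0} → Set (Set Ordinal.{0})) : Prop :=
  (∀ α, α < κ → Order.IsSuccLimit α →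
      (𝒞 α).Finite ∧ (𝒞 α).Nonempty ∧ ∀ C ∈ 𝒞 α, IsClubIn C α) ∧
  (∀ α, α < κ → Order.IsSuccLimit α → ∀ C ∈ 𝒞 α, ∀ β ∈ acc C, C ∩ Iio β ∈ 𝒞 β) ∧
  ¬ ∃ D : Set Ordinal.{0}, IsClubIn D κ ∧ ∀ α ∈ acc D, D ∩ Iio α ∈ 𝒞 α

/-- A weakly inaccessible cardinal: a regular limit cardinal. -/
def IsWInaccessible (c : Cardinal.{0}) : Prop :=
  c.IsRegular ∧ Order.IsSuccLimit c

/-- The Mahlo hierarchy (finite levels): `0`-Mahlo means weakly inaccessible, and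
`(n+1)`-Mahlo means regular with stationarily many `n`-Mahlo cardinals below. -/
def IsNMahlo : ℕ → Cardinal.{0} → Prop
  | 0 => fun c => IsWInaccessible c
  | (n + 1) => fun c => c.IsRegular ∧
      IsStationaryIn {α : Ordinal.{0} | ∃ μ : Cardinal.{0}, μ.ord = α ∧ IsNMahlo n μ} c.ord

/-- A set of ordinals is bounded below `α`. -/
def BoundedIn (s : Set Ordinal.{0}) (α : Ordinal.{0}) : Prop :=
  s = ∅ ∨ ∃ ε < α, ∀ η ∈ s, η ≤ ε

/-- The covering property for a coloring `c : [κ]² → θ`. -/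
def HasCoveringProperty (κ θ : Cardinal.{0})
    (c : Ordinal.{0} → Ordinal.{0} → Ordinal.{0}) : Prop :=
  ∀ α < κ.ord, ∃ f : Ordinal.{0} → Ordinal.{0},
    Set.InjOn f (Iio θ.ord) ∧
    (∀ i < θ.ord, α < f i ∧ f i < κ.ord ∧ Order.IsSuccLimit (f i) ∧ (f i).cof ≠ θ) ∧
    BoundedIn (Iio α \ ⋃ i ∈ Iio θ.ord, DleI c i (f i)) α

section Proof9

/-- If every element of `s` is `≤ a` then `sSup s ≤ a`. -/
private lemma sSup_le_of_le {s : Set Ordinal.{0}} {a : Ordinal.{0}} (h : ∀ x ∈ s, x ≤ a) :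
    sSup s ≤ a := by
  rcases s.eq_empty_or_nonempty with rfl | hne
  · rw [csSup_empty]; exact bot_le
  · exact csSup_le hne h

private lemma exists_gt_of_sSup {s : Set Ordinal.{0}} {δ x : Ordinal.{0}} (h : sSup s = δ)
    (hx : x < δ) : ∃ y ∈ s, x < y := by
  by_contra hcon
  push_neg at hcon
  have := sSup_le_of_le hcon
  rw [h] at this
  exact absurd this hx.not_ge

/-- A subset of `Iio δ` of cardinality less than `cof δ` has supremum `< δ`. -/
private lemma sSup_lt_of_small {s : Set Ordinal.{0}} {δ : Ordinal.{0}} {μ : Cardinal.{0}}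
    (hmk : Cardinal.mk s ≤ Cardinal.lift.{1} μ) (hμ : μ < δ.cof) (hlt : ∀ x ∈ s, x < δ) :
    sSup s < δ := by
  classical
  have hδ0 : 0 < δ := by
    rcases eq_zero_or_pos δ with rfl | h
    · rw [Ordinal.cof_zero] at hμ
      exact absurd hμ (zero_le (a := μ)).not_gt
    · exact h
  have hmkι : Cardinal.mk μ.ord.ToType = μ := by rw [Cardinal.mk_toType, Cardinal.card_ord]
  have hle : Cardinal.mk s ≤ Cardinal.mk (ULift.{1} μ.ord.ToType) := by
    rw [Cardinal.mk_uLift, hmkι]; exact hmk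
  obtain ⟨f⟩ := (Cardinal.le_def _ _).1 hle
  have hFlt : ∀ j : ULift.{1} μ.ord.ToType,
      (if h : ∃ y : s, f y = j then ((Classical.choose h : s) : Ordinal.{0}) else 0) < δ := by
    intro j
    split
    · next h => exact hlt _ (Classical.choose h).2
    · exact hδ0
  have hsup : (⨆ i : μ.ord.ToType,
      (if h : ∃ y : s, f y = ULift.up i then ((Classical.choose h : s) : Ordinal.{0}) else 0)) < δ :=
    Ordinal.iSup_lt_ord (by rw [hmkι]; exact hμ) (fun i => hFlt (ULift.up i))
  refine lt_of_le_of_lt (sSup_le_of_le ?_) hsup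
  intro x hx
  have hex : ∃ y : s, f y = f ⟨x, hx⟩ := ⟨⟨x, hx⟩, rfl⟩
  have hxeq : ((Classical.choose hex : s) : Ordinal.{0}) = x := by
    have := f.injective (Classical.choose_spec hex)
    rw [this]
  have hxle : x ≤ (if h : ∃ y : s, f y = ULift.up ((f ⟨x, hx⟩).down)
      then ((Classical.choose h : s) : Ordinal.{0}) else 0) := by
    rw [ULift.up_down]
    rw [dif_pos hex, hxeq]
  exact hxle.trans (Ordinal.le_iSup _ ((f ⟨x, hx⟩).down))

private lemma mk_eq_lift_of_unbounded {κ : Cardinal.{0}} (hκ : κ.IsRegular) {s : Set Ordinal.{0}}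
    (hsub : s ⊆ Iio κ.ord) (hub : ∀ ζ < κ.ord, ∃ x ∈ s, ζ < x) :
    Cardinal.mk s = Cardinal.lift.{1} κ := by
  refine le_antisymm ?_ ?_
  · have := Cardinal.mk_le_mk_of_subset hsub
    rwa [Ordinal.mk_Iio_ordinal, Cardinal.card_ord] at this
  · by_contra hcon
    rw [not_le] at hcon
    obtain ⟨μ, hμ, hμeq⟩ := Cardinal.lt_lift_iff.1 hcon
    have hlt : sSup s < κ.ord :=
      sSup_lt_of_small hμeq.ge (by rw [hκ.cof_eq]; exact hμ) fun x hx => hsub hx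
    obtain ⟨x, hxs, hx⟩ := hub _ hlt
    exact absurd (le_csSup ⟨κ.ord, fun y hy => (hsub hy).le⟩ hxs) hx.not_ge

private lemma unbounded_of_mk_eq {κ : Cardinal.{0}} (hκ : Cardinal.aleph0 ≤ κ) {s : Set Ordinal.{0}}
    (hmk : Cardinal.mk s = Cardinal.lift.{1} κ) : ∀ ζ < κ.ord, ∃ x ∈ s, ζ < x := by
  intro ζ hζ
  by_contra hcon
  push_neg at hcon
  have hsub : s ⊆ Iio (ζ + 1) := by
    intro x hx
    rw [Ordinal.add_one_eq_succ]
    exact Order.lt_succ_iff.2 (hcon x hx)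
  have hmks : Cardinal.mk s ≤ Cardinal.lift.{1} (ζ + 1).card := by
    have := Cardinal.mk_le_mk_of_subset hsub
    rwa [Ordinal.mk_Iio_ordinal] at this
  have hlt : (ζ + 1).card < κ := by
    refine Cardinal.lt_ord.1 ?_
    rw [Ordinal.add_one_eq_succ]
    exact (Cardinal.isSuccLimit_ord hκ).succ_lt hζ
  rw [hmk] at hmks
  exact absurd (Cardinal.lift_le.1 hmks) hlt.not_ge

private lemma pad_exists {G s : Set Ordinal.{0}} {κ χ : Cardinal.{0}} (hκ : Cardinal.aleph0 ≤ κ)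
    (hG : Cardinal.mk G = Cardinal.lift.{1} κ) (hsG : s ⊆ G) (hχκ : χ ≤ κ)
    (hs : Cardinal.mk s ≤ Cardinal.lift.{1} χ) (hslt : Cardinal.mk s < Cardinal.lift.{1} κ) :
    ∃ t : Set Ordinal.{0}, s ⊆ t ∧ t ⊆ G ∧ Cardinal.mk t = Cardinal.lift.{1} χ := by
  have hκ1 : Cardinal.aleph0 ≤ Cardinal.lift.{1} κ := Cardinal.aleph0_le_lift.2 hκ
  have hdiff : Cardinal.lift.{1} χ ≤ Cardinal.mk ↥(G \ s) := by
    by_contra hcon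
    rw [not_le] at hcon
    have hsplit : G ⊆ (G \ s) ∪ s := by
      intro x hx
      by_cases hxs : x ∈ s
      · exact Or.inr hxs
      · exact Or.inl ⟨hx, hxs⟩
    have hle : Cardinal.mk G ≤ Cardinal.mk ↥(G \ s) + Cardinal.mk s :=
      (Cardinal.mk_le_mk_of_subset hsplit).trans (Cardinal.mk_union_le _ _)
    have hcon2 : Cardinal.mk G < Cardinal.lift.{1} κ :=
      hle.trans_lt (Cardinal.add_lt_of_lt hκ1 (hcon.trans_le (Cardinal.lift_le.2 hχκ)) hslt)
    rw [hG] at hcon2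
    exact lt_irrefl _ hcon2
  obtain ⟨u, huGS, humk⟩ := Cardinal.le_mk_iff_exists_subset.1 hdiff
  obtain ⟨f⟩ := (Cardinal.le_def _ _).1 (show Cardinal.mk s ≤ Cardinal.mk u from hs.trans humk.ge)
  have hFimu : (Subtype.val '' (Set.range f) : Set Ordinal.{0}) ⊆ u := by
    rintro x ⟨y, _, rfl⟩
    exact y.2
  refine ⟨s ∪ (u \ Subtype.val '' (Set.range f)), subset_union_left, ?_, ?_⟩
  · intro x hx
    rcases hx with hx | hx
    · exact hsG hx
    · exact (huGS hx.1).1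
  · have hdisj : Disjoint s (u \ Subtype.val '' (Set.range f)) := by
      rw [Set.disjoint_left]
      intro x hxs hxu
      exact (huGS hxu.1).2 hxs
    rw [Cardinal.mk_union_of_disjoint hdisj]
    have h1 : Cardinal.mk ↥(Subtype.val '' (Set.range f)) = Cardinal.mk s := by
      rw [Cardinal.mk_image_eq Subtype.val_injective, Cardinal.mk_range_eq _ f.injective]
    have h2 : Cardinal.mk ↥(u \ Subtype.val '' (Set.range f)) +
        Cardinal.mk ↥(Subtype.val '' (Set.range f)) = Cardinal.mk u :=
      Cardinal.mk_diff_add_mk hFimu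
    rw [h1] at h2
    rw [add_comm] at h2
    rw [h2, humk]

private lemma sSup_inter_Iio_eq {W : Set Ordinal.{0}} {α : Ordinal.{0}}
    (h : ∀ x < α, ∃ y ∈ W, x < y ∧ y < α) : sSup (W ∩ Iio α) = α := by
  refine le_antisymm (sSup_le_of_le fun x hx => hx.2.le) ?_
  by_contra hcon
  rw [not_le] at hcon
  obtain ⟨y, hyW, hgt, hyα⟩ := h _ hcon
  exact absurd (le_csSup ⟨α, fun z hz => hz.2.le⟩ (⟨hyW, hyα⟩ : y ∈ W ∩ Iio α)) hgt.not_ge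

/-- Key construction: a point `δ` above `ζ` which is a limit of points of `U` and of `V`
and in which every subset of size `< lam` is bounded. -/
private lemma exists_point {κo : Ordinal.{0}} (hκo : Order.IsSuccLimit κo) {lam : Cardinal.{0}}
    (hlam : lam.IsRegular) (hlamκ : lam < κo.cof) {U V : Set Ordinal.{0}}
    (hU : ∀ x < κo, ∃ y ∈ U, x < y ∧ y < κo) (hV : ∀ x < κo, ∃ y ∈ V, x < y ∧ y < κo)
    {ζ : Ordinal.{0}} (hζ : ζ < κo) :
    ∃ δ : Ordinal.{0}, ζ < δ ∧ δ < κo ∧ 0 < δ ∧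
      sSup (U ∩ Iio δ) = δ ∧ sSup (V ∩ Iio δ) = δ ∧
      ∀ s : Set Ordinal.{0}, (∀ x ∈ s, x < δ) →
        Cardinal.mk s < Cardinal.lift.{1} lam → sSup s < δ := by
  classical
  have hstep : ∀ x, x < κo → ∃ z, x < z ∧ z < κo ∧
      (∃ u ∈ U, x < u ∧ u < z) ∧ (∃ v ∈ V, x < v ∧ v < z) := by
    intro x hx
    obtain ⟨u, huU, hxu, huκ⟩ := hU x hx
    obtain ⟨v, hvV, huv, hvκ⟩ := hV u huκ
    have hv1 : v < v + 1 := by rw [Ordinal.add_one_eq_succ]; exact Order.lt_succ v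
    have hv1κ : v + 1 < κo := by rw [Ordinal.add_one_eq_succ]; exact hκo.succ_lt hvκ
    exact ⟨v + 1, (hxu.trans huv).trans hv1, hv1κ,
      ⟨u, huU, hxu, huv.trans hv1⟩, ⟨v, hvV, hxu.trans huv, hv1⟩⟩
  set g : Ordinal.{0} → Ordinal.{0} :=
    fun x => if h : x < κo then (hstep x h).choose else 0 with hgdef
  have hgspec : ∀ x, x < κo → x < g x ∧ g x < κo ∧
      (∃ u ∈ U, x < u ∧ u < g x) ∧ (∃ v ∈ V, x < v ∧ v < g x) := by
    intro x hx
    have : g x = (hstep x hx).choose := by rw [hgdef]; exact dif_pos hx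
    rw [this]
    exact (hstep x hx).choose_spec
  set F : Ordinal.{0} → Ordinal.{0} :=
    Ordinal.lt_wf.fix
      (fun ξ ih => g (max ζ (sSup (Set.range fun p : Iio ξ => ih p.1 p.2)))) with hFdef
  have hFeq : ∀ ξ, F ξ = g (max ζ (sSup (F '' Iio ξ))) := by
    intro ξ
    conv_lhs => rw [hFdef]
    rw [WellFounded.fix_eq]
    simp only [← hFdef]
    rw [Set.image_eq_range]
  have key : ∀ ξ, ξ < lam.ord → F ξ < κo ∧ ∀ η < ξ, F η < F ξ := by
    intro ξ
    induction ξ using Ordinal.induction with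
    | _ ξ ih =>
      intro hξ
      have hsub : ∀ y ∈ F '' Iio ξ, y < κo := by
        rintro y ⟨η, hη, rfl⟩
        exact (ih η hη (hη.trans hξ)).1
      have hmk : Cardinal.mk ↥(F '' Iio ξ) ≤ Cardinal.lift.{1} ξ.card := by
        refine le_trans Cardinal.mk_image_le ?_
        rw [Ordinal.mk_Iio_ordinal]
      have hsup : sSup (F '' Iio ξ) < κo :=
        sSup_lt_of_small hmk ((Cardinal.lt_ord.1 hξ).trans hlamκ) hsub
      have hm : max ζ (sSup (F '' Iio ξ)) < κo := max_lt hζ hsup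
      obtain ⟨hg1, hg2, _, _⟩ := hgspec _ hm
      constructor
      · rw [hFeq ξ]; exact hg2
      · intro η hη
        have hle : F η ≤ sSup (F '' Iio ξ) :=
          le_csSup ⟨κo, fun y hy => (hsub y hy).le⟩ (Set.mem_image_of_mem F hη)
        calc F η ≤ max ζ (sSup (F '' Iio ξ)) := hle.trans (le_max_right _ _)
          _ < g (max ζ (sSup (F '' Iio ξ))) := hg1
          _ = F ξ := (hFeq ξ).symm
  have hlimord : Order.IsSuccLimit lam.ord := Cardinal.isSuccLimit_ord hlam.aleph0_le
  have hmkδ : Cardinal.mk ↥(F '' Iio lam.ord) ≤ Cardinal.lift.{1} lam := by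
    refine le_trans Cardinal.mk_image_le ?_
    rw [Ordinal.mk_Iio_ordinal, Cardinal.card_ord]
  have hδκ : sSup (F '' Iio lam.ord) < κo :=
    sSup_lt_of_small hmkδ hlamκ (by rintro y ⟨η, hη, rfl⟩; exact (key η hη).1)
  set δ := sSup (F '' Iio lam.ord) with hδdef
  have hsucclt : ∀ ξ, ξ < lam.ord → ξ + 1 < lam.ord := by
    intro ξ hξ
    rw [Ordinal.add_one_eq_succ]
    exact hlimord.succ_lt hξ
  have hltsucc : ∀ ξ : Ordinal.{0}, ξ < ξ + 1 := by
    intro ξ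
    rw [Ordinal.add_one_eq_succ]
    exact Order.lt_succ ξ
  have hFle : ∀ ξ, ξ < lam.ord → F ξ ≤ δ := by
    intro ξ hξ
    exact le_csSup ⟨κo, by rintro y ⟨η, hη, rfl⟩; exact (key η hη).1.le⟩
      (Set.mem_image_of_mem F hξ)
  have hFlt : ∀ ξ, ξ < lam.ord → F ξ < δ := by
    intro ξ hξ
    have hs := hsucclt ξ hξ
    exact ((key _ hs).2 ξ (hltsucc ξ)).trans_le (hFle _ hs)
  have hmlt : ∀ ξ, ξ < lam.ord → max ζ (sSup (F '' Iio ξ)) < κo := by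
    intro ξ hξ
    refine max_lt hζ (sSup_lt_of_small ?_ ((Cardinal.lt_ord.1 hξ).trans hlamκ) ?_)
    · exact le_trans Cardinal.mk_image_le (by rw [Ordinal.mk_Iio_ordinal])
    · rintro y ⟨η, hη, rfl⟩
      exact (key η (hη.trans hξ)).1
  have hζδ : ζ < δ := by
    have himg : F '' Iio (0 : Ordinal.{0}) = (∅ : Set Ordinal.{0}) := by
      ext x
      simp [not_lt_zero]
    have h0 : F 0 = g ζ := by
      rw [hFeq 0, himg, csSup_empty, Ordinal.bot_eq_zero, max_eq_left (zero_le (a := ζ))]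
    have hgζ := (hgspec ζ hζ).1
    rw [← h0] at hgζ
    exact hgζ.trans (hFlt 0 hlimord.pos)
  have h0δ : 0 < δ := lt_of_le_of_lt (zero_le (a := ζ)) hζδ
  have hWub : ∀ x, x < δ → (∃ u ∈ U, x < u ∧ u < δ) ∧ (∃ v ∈ V, x < v ∧ v < δ) := by
    intro x hx
    obtain ⟨y, hymem, hxy⟩ := exists_gt_of_sSup hδdef.symm hx
    obtain ⟨ξ, hξ, rfl⟩ := hymem
    have hξ1 := hsucclt ξ hξ
    have hm : max ζ (sSup (F '' Iio (ξ + 1))) < κo := hmlt _ hξ1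
    have hFξm : F ξ ≤ max ζ (sSup (F '' Iio (ξ + 1))) := by
      refine le_trans ?_ (le_max_right _ _)
      exact le_csSup ⟨κo, by rintro y ⟨η, hη, rfl⟩; exact (key η (hη.trans hξ1)).1.le⟩
        (Set.mem_image_of_mem F (hltsucc ξ))
    have hgm : F (ξ + 1) = g (max ζ (sSup (F '' Iio (ξ + 1)))) := hFeq (ξ + 1)
    obtain ⟨_, _, ⟨u, huU, hmu, hug⟩, ⟨v, hvV, hmv, hvg⟩⟩ := hgspec _ hm
    have hFδ : F (ξ + 1) ≤ δ := hFle _ hξ1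
    constructor
    · exact ⟨u, huU, (hxy.trans_le hFξm).trans hmu,
        lt_of_lt_of_le (hug.trans_le hgm.ge) hFδ⟩
    · exact ⟨v, hvV, (hxy.trans_le hFξm).trans hmv,
        lt_of_lt_of_le (hvg.trans_le hgm.ge) hFδ⟩
  have hUδ : sSup (U ∩ Iio δ) = δ :=
    sSup_inter_Iio_eq fun x hx => (hWub x hx).1
  have hVδ : sSup (V ∩ Iio δ) = δ :=
    sSup_inter_Iio_eq fun x hx => (hWub x hx).2
  refine ⟨δ, hζδ, hδκ, h0δ, hUδ, hVδ, ?_⟩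
  intro s hs hmks
  rcases s.eq_empty_or_nonempty with rfl | hne
  · rw [csSup_empty, Ordinal.bot_eq_zero]
    exact h0δ
  obtain ⟨μ, hμ, hμeq⟩ := Cardinal.lt_lift_iff.1 hmks
  have hidx : ∀ x ∈ s, sInf {ξ | ξ < lam.ord ∧ x < F ξ} < lam.ord ∧
      x < F (sInf {ξ | ξ < lam.ord ∧ x < F ξ}) := by
    intro x hx
    have hne' : {ξ | ξ < lam.ord ∧ x < F ξ}.Nonempty := by
      obtain ⟨y, hymem, hxy⟩ := exists_gt_of_sSup hδdef.symm (hs x hx)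
      obtain ⟨ξ, hξ, rfl⟩ := hymem
      exact ⟨ξ, hξ, hxy⟩
    exact csInf_mem hne'
  have hidximg : sSup ((fun x => sInf {ξ | ξ < lam.ord ∧ x < F ξ}) '' s) < lam.ord := by
    refine sSup_lt_of_small (le_trans Cardinal.mk_image_le hμeq.ge) ?_ ?_
    · rw [hlam.cof_eq]; exact hμ
    · rintro y ⟨x, hx, rfl⟩
      exact (hidx x hx).1
  have hbound : ∀ x ∈ s, x ≤ F (sSup ((fun x => sInf {ξ | ξ < lam.ord ∧ x < F ξ}) '' s)) := by
    intro x hx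
    have hle1 : sInf {ξ | ξ < lam.ord ∧ x < F ξ} ≤
        sSup ((fun x => sInf {ξ | ξ < lam.ord ∧ x < F ξ}) '' s) :=
      le_csSup ⟨lam.ord, by rintro y ⟨x', hx', rfl⟩; exact (hidx x' hx').1.le⟩
        (Set.mem_image_of_mem _ hx)
    rcases lt_or_eq_of_le hle1 with hl | he
    · exact ((hidx x hx).2.trans ((key _ hidximg).2 _ hl)).le
    · rw [← he]
      exact (hidx x hx).2.le
  exact (sSup_le_of_le hbound).trans_lt (hFlt _ hidximg)

end Proof9


section Proof9Main

private lemma covers_of_covers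
    (κ : Cardinal.{0}) (hκreg : κ.IsRegular) (hκunc : Cardinal.aleph0 < κ)
    (Γ : Set Ordinal.{0}) (hΓ : Γ ⊆ Iio κ.ord)
    (C : Ordinal.{0} → Set Ordinal.{0}) (hC : IsCSeqOn Γ C)
    (D : Set Ordinal.{0}) (hD : IsClubIn D κ.ord)
    (ν : Cardinal.{0})
    (hstat : IsStationaryIn (Γ ∩ {α | α < κ.ord ∧ ν ≤ α.cof}) κ.ord)
    (h1 : ∀ β ∈ Γ, β.cof < ν → otp (C β) < Ordinal.lift.{1} ν.ord)
    (h2 : ∀ β ∈ Γ, β ∉ D → 0 < β → sSup (D ∩ Iio β) ≤ sInf (C β))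
    (χ : Cardinal.{0}) (hχκ : χ ≤ κ)
    (hcov : κ ≤ Order.succ χ ∨ CSeqCovers κ Γ C χ) :
    CSeqCovers κ (Γ ∩ (D ∩ {α | α < κ.ord ∧ ν ≤ α.cof})) C χ := by
  classical
  have hκℵ : Cardinal.aleph0 ≤ κ := hκreg.aleph0_le
  have hκolim : Order.IsSuccLimit (κ.ord) := Cardinal.isSuccLimit_ord hκℵ
  have hκocof : (κ.ord).cof = κ := hκreg.cof_eq
  have hltsucc : ∀ ξ : Ordinal.{0}, ξ < ξ + 1 := by
    intro ξ
    rw [Ordinal.add_one_eq_succ]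
    exact Order.lt_succ ξ
  have hsucclt : ∀ ξ, ξ < κ.ord → ξ + 1 < κ.ord := by
    intro ξ hξ
    rw [Ordinal.add_one_eq_succ]
    exact hκolim.succ_lt hξ
  have hDub : ∀ x < κ.ord, ∃ y ∈ D, x < y ∧ y < κ.ord := by
    intro x hx
    obtain ⟨y, hyD, hy⟩ := hD.2.1 (x + 1) (hsucclt x hx)
    exact ⟨y, hyD, lt_of_lt_of_le (hltsucc x) hy, hD.1 hyD⟩
  have hclubD : ∀ ζ < κ.ord, IsClubIn {x | ζ < x ∧ x < κ.ord ∧ x ∈ D} κ.ord := by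
    intro ζ hζ
    refine ⟨fun x hx => hx.2.1, ?_, ?_⟩
    · intro α hα
      obtain ⟨y, hyD, hy, hyκ⟩ := hDub (max α ζ) (max_lt hα hζ)
      exact ⟨y, ⟨lt_of_le_of_lt (le_max_right _ _) hy, hyκ, hyD⟩,
        ((le_max_left α ζ).trans hy.le)⟩
    · intro α hα h0 hsup
      obtain ⟨y0, hy0, _⟩ := exists_gt_of_sSup hsup h0
      refine ⟨hy0.1.1.trans hy0.2, hα, ?_⟩
      refine hD.2.2 α hα h0 (sSup_inter_Iio_eq ?_)
      intro x hx
      obtain ⟨y, hy, hgt⟩ := exists_gt_of_sSup hsup hx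
      exact ⟨y, hy.1.2.2, hgt, hy.2⟩
  have hΓ'ub : ∀ ζ < κ.ord, ∃ x ∈ Γ ∩ (D ∩ {α | α < κ.ord ∧ ν ≤ α.cof}), ζ < x := by
    intro ζ hζ
    obtain ⟨x, hx⟩ := hstat _ (hclubD ζ hζ)
    obtain ⟨⟨hxΓ, hxE⟩, hxζ, hxκ, hxD⟩ := hx
    exact ⟨x, ⟨hxΓ, hxD, hxE⟩, hxζ⟩
  have hΓ'mk : Cardinal.mk ↥(Γ ∩ (D ∩ {α | α < κ.ord ∧ ν ≤ α.cof})) = Cardinal.lift.{1} κ :=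
    mk_eq_lift_of_unbounded hκreg (fun x hx => hΓ hx.1) hΓ'ub
  -- Case A : κ ≤ succ χ
  have caseA : κ ≤ Order.succ χ → CSeqCovers κ (Γ ∩ (D ∩ {α | α < κ.ord ∧ ν ≤ α.cof})) C χ := by
    intro hA
    have hΔ'sub : {x | ∃ β ∈ Γ ∩ (D ∩ {α | α < κ.ord ∧ ν ≤ α.cof}), x ∈ C β} ⊆ Iio κ.ord := by
      rintro x ⟨β, hβ, hx⟩
      exact Set.mem_Iio.2
        (lt_trans (Set.mem_Iio.1 ((hC β hβ.1).1 hx)) (Set.mem_Iio.1 (hΓ hβ.1)))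
    have hΔ'ub : ∀ ζ < κ.ord,
        ∃ x ∈ {x | ∃ β ∈ Γ ∩ (D ∩ {α | α < κ.ord ∧ ν ≤ α.cof}), x ∈ C β}, ζ < x := by
      intro ζ hζ
      obtain ⟨β, hβΓ', hβgt⟩ := hΓ'ub (ζ + 1) (hsucclt ζ hζ)
      have hsupC : sSup (C β) = sSup (Iio β) := (hC β hβΓ'.1).2.2
      have hle : ζ + 1 ≤ sSup (C β) := by
        rw [hsupC]
        exact le_csSup ⟨β, fun y hy => hy.le⟩ hβgt
      by_contra hcon
      push_neg at hcon
      have hle2 : sSup (C β) ≤ ζ := sSup_le_of_le fun x hx => hcon x ⟨β, hβΓ', hx⟩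
      exact absurd (hle.trans hle2) (hltsucc ζ).not_ge
    have hΔ'mk := mk_eq_lift_of_unbounded hκreg hΔ'sub hΔ'ub
    have hex : ∀ α < κ.ord, ∃ t : Set Ordinal.{0},
        t ⊆ Γ ∩ (D ∩ {α | α < κ.ord ∧ ν ≤ α.cof}) ∧
        Cardinal.mk t = Cardinal.lift.{1} χ ∧
        {x | ∃ β ∈ Γ ∩ (D ∩ {α | α < κ.ord ∧ ν ≤ α.cof}), x ∈ C β} ∩ Iio α ⊆
          ⋃ β ∈ t, C β := by
      intro α hα
      have hch : ∀ x : ↥({x | ∃ β ∈ Γ ∩ (D ∩ {α | α < κ.ord ∧ ν ≤ α.cof}), x ∈ C β} ∩ Iio α),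
          ∃ β, β ∈ Γ ∩ (D ∩ {α | α < κ.ord ∧ ν ≤ α.cof}) ∧ (x : Ordinal.{0}) ∈ C β := by
        intro x
        obtain ⟨β, hβ, hx⟩ := x.2.1
        exact ⟨β, hβ, hx⟩
      choose fb hfb1 hfb2 using hch
      have hsmk : Cardinal.mk ↥(Set.range fb) ≤ Cardinal.lift.{1} α.card := by
        refine le_trans Cardinal.mk_range_le ?_
        refine le_trans (Cardinal.mk_le_mk_of_subset Set.inter_subset_right) ?_
        rw [Ordinal.mk_Iio_ordinal]
      have hcardα : α.card ≤ χ := by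
        have hlt := (Cardinal.lt_ord.1 hα).trans_le hA
        exact Order.lt_succ_iff.1 hlt
      have hsχ : Cardinal.mk ↥(Set.range fb) ≤ Cardinal.lift.{1} χ :=
        hsmk.trans (Cardinal.lift_le.2 hcardα)
      have hsltκ : Cardinal.mk ↥(Set.range fb) < Cardinal.lift.{1} κ :=
        hsmk.trans_lt (Cardinal.lift_lt.2 (Cardinal.lt_ord.1 hα))
      have hsΓ' : Set.range fb ⊆ Γ ∩ (D ∩ {α | α < κ.ord ∧ ν ≤ α.cof}) := by
        rintro x ⟨y, rfl⟩
        exact hfb1 y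
      obtain ⟨t, hst, htΓ', htmk⟩ := pad_exists hκℵ hΓ'mk hsΓ' hχκ hsχ hsltκ
      refine ⟨t, htΓ', htmk, ?_⟩
      intro x hx
      exact Set.mem_iUnion₂.2 ⟨fb ⟨x, hx⟩, hst ⟨⟨x, hx⟩, rfl⟩, hfb2 ⟨x, hx⟩⟩
    choose bt hbt1 hbt2 hbt3 using hex
    refine ⟨_, fun α => if h : α < κ.ord then bt α h else ∅, hΔ'sub, hΔ'mk, ?_, ?_⟩
    · intro α hα
      simp only [dif_pos hα]
      exact ⟨hbt1 α hα, hbt2 α hα⟩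
    · intro α hα
      simp only [dif_pos hα]
      exact hbt3 α hα
  rcases hcov with hA | hcov
  · exact caseA hA
  by_cases hAB : κ ≤ Order.succ χ
  · exact caseA hAB
  rw [not_le] at hAB
  obtain ⟨Δ, b, hΔsub, hΔmk, hb, hbcov⟩ := hcov
  have hΔub : ∀ x < κ.ord, ∃ y ∈ Δ, x < y ∧ y < κ.ord := by
    intro x hx
    obtain ⟨y, hyΔ, hy⟩ := unbounded_of_mk_eq hκℵ hΔmk x hx
    exact ⟨y, hyΔ, hy, hΔsub hyΔ⟩
  set lam : Cardinal.{0} := if Cardinal.aleph0 ≤ χ then Order.succ χ else Cardinal.aleph0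
    with hlamdef
  have hlamreg : lam.IsRegular := by
    rw [hlamdef]
    split
    · exact Cardinal.isRegular_succ ‹_›
    · exact Cardinal.isRegular_aleph0
  have hχlam : χ < lam := by
    rw [hlamdef]
    split
    · exact Order.lt_succ χ
    · exact lt_of_not_ge ‹_›
  have hlamκ : lam < κ := by
    rw [hlamdef]
    split
    · exact hAB
    · exact hκunc
  have hlamκo : lam < (κ.ord).cof := by rw [hκocof]; exact hlamκ
  have hPub : ∀ ζ < κ.ord, ∃ δ, (δ < κ.ord ∧ 0 < δ ∧ sSup (Δ ∩ Iio δ) = δ ∧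
      sSup (D ∩ Iio δ) = δ ∧
      ∀ s : Set Ordinal.{0}, (∀ x ∈ s, x < δ) →
        Cardinal.mk s < Cardinal.lift.{1} (max lam ν) → sSup s < δ) ∧ ζ < δ := by
    intro ζ hζ
    by_cases hcase : lam ≤ ν
    · have hmuν : max lam ν = ν := max_eq_right hcase
      have hclub : IsClubIn {x | ζ < x ∧ x < κ.ord ∧ 0 < x ∧ sSup (Δ ∩ Iio x) = x ∧
          sSup (D ∩ Iio x) = x} κ.ord := by
        refine ⟨fun x hx => hx.2.1, ?_, ?_⟩
        · intro α hα
          obtain ⟨δ, hζδ, hδκ, h0δ, hΔδ, hDδ, _⟩ :=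
            exists_point hκolim Cardinal.isRegular_aleph0 (by rw [hκocof]; exact hκunc)
              hΔub hDub (max_lt hα hζ)
          exact ⟨δ, ⟨lt_of_le_of_lt (le_max_right α ζ) hζδ, hδκ, h0δ, hΔδ, hDδ⟩,
            ((le_max_left α ζ).trans hζδ.le)⟩
        · intro α hα h0 hsup
          obtain ⟨y0, hy0, _⟩ := exists_gt_of_sSup hsup h0
          refine ⟨hy0.1.1.trans hy0.2, hα, h0, ?_, ?_⟩
          · refine sSup_inter_Iio_eq ?_
            intro x hx
            obtain ⟨y, hy, hgt⟩ := exists_gt_of_sSup hsup hx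
            obtain ⟨z, hz, hzgt⟩ := exists_gt_of_sSup hy.1.2.2.2.1 hgt
            exact ⟨z, hz.1, hzgt, hz.2.trans hy.2⟩
          · refine sSup_inter_Iio_eq ?_
            intro x hx
            obtain ⟨y, hy, hgt⟩ := exists_gt_of_sSup hsup hx
            obtain ⟨z, hz, hzgt⟩ := exists_gt_of_sSup hy.1.2.2.2.2 hgt
            exact ⟨z, hz.1, hzgt, hz.2.trans hy.2⟩
      obtain ⟨x, hx⟩ := hstat _ hclub
      obtain ⟨⟨hxΓ, hxE⟩, hxζ, hxκ, hx0, hxΔ, hxD⟩ := hx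
      refine ⟨x, ⟨hxκ, hx0, hxΔ, hxD, ?_⟩, hxζ⟩
      intro s hs hmks
      rw [hmuν] at hmks
      obtain ⟨μ, hμ, hμeq⟩ := Cardinal.lt_lift_iff.1 hmks
      exact sSup_lt_of_small hμeq.ge (hμ.trans_le hxE.2) hs
    · rw [not_le] at hcase
      have hmulam : max lam ν = lam := max_eq_left hcase.le
      obtain ⟨δ, hζδ, hδκ, h0δ, hΔδ, hDδ, hbnd⟩ :=
        exists_point hκolim hlamreg hlamκo hΔub hDub hζ
      refine ⟨δ, ⟨hδκ, h0δ, hΔδ, hDδ, ?_⟩, hζδ⟩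
      intro s hs hmks
      rw [hmulam] at hmks
      exact hbnd s hs hmks
  set X : Set Ordinal.{0} := {δ | δ < κ.ord ∧ 0 < δ ∧ sSup (Δ ∩ Iio δ) = δ ∧
      sSup (D ∩ Iio δ) = δ ∧
      ∀ s : Set Ordinal.{0}, (∀ x ∈ s, x < δ) →
        Cardinal.mk s < Cardinal.lift.{1} (max lam ν) → sSup s < δ} with hXdef
  have hXsub : X ⊆ Iio κ.ord := fun δ hδ => hδ.1
  have hXub : ∀ ζ < κ.ord, ∃ x ∈ X, ζ < x := by
    intro ζ hζ
    obtain ⟨δ, hP, hgt⟩ := hPub ζ hζ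
    exact ⟨δ, hP, hgt⟩
  have hXmk : Cardinal.mk X = Cardinal.lift.{1} κ := mk_eq_lift_of_unbounded hκreg hXsub hXub
  have hιmk : Cardinal.mk (lam.ord.ToType) = lam := by
    rw [Cardinal.mk_toType, Cardinal.card_ord]
  have hprod : Cardinal.mk X = Cardinal.mk (ULift.{1} (lam.ord.ToType × (κ.ord).ToType)) := by
    rw [Cardinal.mk_uLift, Cardinal.mk_prod, Cardinal.lift_id, Cardinal.lift_id, hιmk,
      Cardinal.mk_toType, Cardinal.card_ord,
      Cardinal.mul_eq_right hκℵ hlamκ.le hlamreg.pos.ne']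
    exact hXmk
  obtain ⟨e⟩ := Cardinal.eq.1 hprod
  set Xp : lam.ord.ToType → Set Ordinal.{0} :=
    fun i => {x | ∃ h : x ∈ X, ((e ⟨x, h⟩).down).1 = i} with hXpdef
  have hXpX : ∀ i, Xp i ⊆ X := by
    intro i x hx
    obtain ⟨h, _⟩ := hx
    exact h
  have hXpdisj : ∀ i1 i2 x, x ∈ Xp i1 → x ∈ Xp i2 → i1 = i2 := by
    intro i1 i2 x hx1 hx2
    obtain ⟨ha, he1⟩ := hx1
    obtain ⟨hb', he2⟩ := hx2
    rw [← he1, ← he2]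
  have hXpmk : ∀ i, Cardinal.mk ↥(Xp i) = Cardinal.lift.{1} κ := by
    intro i
    refine le_antisymm ?_ ?_
    · have := Cardinal.mk_le_mk_of_subset ((hXpX i).trans hXsub)
      rwa [Ordinal.mk_Iio_ordinal, Cardinal.card_ord] at this
    · have hmem : ∀ j : (κ.ord).ToType,
          ((e.symm (ULift.up (i, j)) : ↥X) : Ordinal.{0}) ∈ Xp i := by
        intro j
        refine ⟨(e.symm (ULift.up (i, j))).2, ?_⟩
        have heta : (⟨((e.symm (ULift.up (i, j)) : ↥X) : Ordinal.{0}),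
            (e.symm (ULift.up (i, j))).2⟩ : ↥X) = e.symm (ULift.up (i, j)) :=
          Subtype.ext rfl
        rw [heta, Equiv.apply_symm_apply]
      have hinj : Function.Injective
          (fun j : ULift.{1} (κ.ord).ToType => (⟨_, hmem j.down⟩ : ↥(Xp i))) := by
        intro j1 j2 hj
        have hval : ((e.symm (ULift.up (i, j1.down)) : ↥X) : Ordinal.{0}) =
            ((e.symm (ULift.up (i, j2.down)) : ↥X) : Ordinal.{0}) :=
          congrArg (fun z : ↥(Xp i) => (z : Ordinal.{0})) hj
        have hXeq : e.symm (ULift.up (i, j1.down)) = e.symm (ULift.up (i, j2.down)) :=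
          Subtype.ext hval
        have := e.symm.injective hXeq
        have hdown := congrArg (fun z => z.down.2) this
        cases j1
        cases j2
        simpa using hdown
      have := Cardinal.mk_le_of_injective hinj
      rwa [Cardinal.mk_uLift, Cardinal.mk_toType, Cardinal.card_ord] at this
  have hgood : ∃ i, ∀ ζ < κ.ord, ∃ a, (a < κ.ord ∧ ∀ β ∈ b a, β ∉ Xp i) ∧ ζ < a := by
    by_contra hcon
    have hbad : ∀ i, ∃ ζ, ζ < κ.ord ∧ ∀ a, a < κ.ord → (∀ β ∈ b a, β ∉ Xp i) → a ≤ ζ := by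
      intro i
      by_contra hno
      apply hcon
      refine ⟨i, fun ζ hζ => ?_⟩
      by_contra hno2
      apply hno
      refine ⟨ζ, hζ, fun a haκ hano => ?_⟩
      by_contra hle
      exact hno2 ⟨a, ⟨haκ, hano⟩, lt_of_not_ge hle⟩
    choose Z hZκ hZ using hbad
    have hsupZ : iSup Z < κ.ord :=
      Ordinal.iSup_lt_ord (by rw [hιmk]; exact hlamκo) hZκ
    have ha0κ : iSup Z + 1 < κ.ord := hsucclt _ hsupZ
    have ha0gt : ∀ i, Z i < iSup Z + 1 :=
      fun i => lt_of_le_of_lt (Ordinal.le_iSup Z i) (hltsucc _)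
    have hhit : ∀ i, ∃ β, β ∈ b (iSup Z + 1) ∧ β ∈ Xp i := by
      intro i
      by_contra hno
      push_neg at hno
      exact absurd (hZ i _ ha0κ hno) (ha0gt i).not_ge
    choose cf hcf1 hcf2 using hhit
    have hinj : Function.Injective
        (fun j : ULift.{1} lam.ord.ToType =>
          (⟨cf j.down, hcf1 j.down⟩ : ↥(b (iSup Z + 1)))) := by
      intro j1 j2 hj
      have hveq : cf j1.down = cf j2.down := congrArg Subtype.val hj
      have h2' := hcf2 j2.down
      rw [← hveq] at h2'
      have := hXpdisj j1.down j2.down _ (hcf2 j1.down) h2'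
      cases j1
      cases j2
      simpa using this
    have hle := Cardinal.mk_le_of_injective hinj
    rw [Cardinal.mk_uLift, hιmk] at hle
    have hbamk : Cardinal.mk ↥(b (iSup Z + 1)) = Cardinal.lift.{1} χ := (hb _ ha0κ).2
    rw [hbamk] at hle
    exact absurd (Cardinal.lift_le.1 hle) hχlam.not_ge
  obtain ⟨i0, hgood⟩ := hgood
  have hex : ∀ α < κ.ord, ∃ t : Set Ordinal.{0},
      t ⊆ Γ ∩ (D ∩ {α | α < κ.ord ∧ ν ≤ α.cof}) ∧
      Cardinal.mk t = Cardinal.lift.{1} χ ∧ Xp i0 ∩ Iio α ⊆ ⋃ β ∈ t, C β := by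
    intro α hα
    obtain ⟨a, ⟨haκ, hano⟩, hαa⟩ := hgood α hα
    have hbamk : Cardinal.mk ↥(b a) = Cardinal.lift.{1} χ := (hb a haκ).2
    have hbaΓ : b a ⊆ Γ := (hb a haκ).1
    have hcovs : Xp i0 ∩ Iio α ⊆ ⋃ β ∈ b a ∩ (Γ ∩ (D ∩ {α | α < κ.ord ∧ ν ≤ α.cof})), C β := by
      rintro δ ⟨hδΔ', hδα⟩
      obtain ⟨hδκ, hδ0, hΔacc, hDacc, hbnd⟩ := hXpX i0 hδΔ'
      have hδa : δ < a := hδα.trans hαa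
      have hexβ : ∃ β ∈ b a, sSup (C β ∩ Iio δ) = δ := by
        by_contra hno
        push_neg at hno
        have hltβ : ∀ β ∈ b a, sSup (C β ∩ Iio δ) < δ := fun β hβ =>
          lt_of_le_of_ne (sSup_le_of_le fun x hx => hx.2.le) (hno β hβ)
        have himglt : sSup ((fun β => sSup (C β ∩ Iio δ)) '' b a) < δ := by
          refine hbnd _ ?_ ?_
          · rintro y ⟨β, hβ, rfl⟩
            exact hltβ β hβ
          · refine lt_of_le_of_lt (le_trans Cardinal.mk_image_le hbamk.le) ?_
            exact Cardinal.lift_lt.2 (hχlam.trans_le (le_max_left lam ν))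
        obtain ⟨z, hz, hzgt⟩ := exists_gt_of_sSup hΔacc himglt
        have hzcov := hbcov a haκ ⟨hz.1, hz.2.trans hδa⟩
        obtain ⟨β, hβ, hzC⟩ := Set.mem_iUnion₂.1 hzcov
        have hza : z ≤ sSup (C β ∩ Iio δ) :=
          le_csSup ⟨δ, fun y hy => hy.2.le⟩ ⟨hzC, hz.2⟩
        have hzb : sSup (C β ∩ Iio δ) ≤ sSup ((fun β => sSup (C β ∩ Iio δ)) '' b a) := by
          refine le_csSup ⟨δ, ?_⟩ ⟨β, hβ, rfl⟩
          rintro y ⟨β', hβ', rfl⟩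
          exact (hltβ β' hβ').le
        exact absurd (hza.trans hzb) hzgt.not_ge
      obtain ⟨β, hβb, hβsup⟩ := hexβ
      have hβΓ : β ∈ Γ := hbaΓ hβb
      have hβκ : β < κ.ord := hΓ hβΓ
      obtain ⟨hCsub, hCcl, _⟩ := hC β hβΓ
      have hδβ : δ < β := by
        rcases lt_trichotomy δ β with h | h | h
        · exact h
        · exact absurd (h ▸ hδΔ') (hano β hβb)
        · exfalso
          have hle : sSup (C β ∩ Iio δ) ≤ β := sSup_le_of_le fun x hx => (hCsub hx.1).le
          rw [hβsup] at hle
          exact absurd hle h.not_ge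
      have hδC : δ ∈ C β := hCcl δ hδβ hδ0 hβsup
      have hδD : δ ∈ D := hD.2.2 δ hδκ hδ0 hDacc
      have hCne : (C β ∩ Iio δ).Nonempty := by
        rcases (C β ∩ Iio δ).eq_empty_or_nonempty with he | hne
        · rw [he, csSup_empty, Ordinal.bot_eq_zero] at hβsup
          exact absurd hβsup.symm hδ0.ne'
        · exact hne
      obtain ⟨x0, hx0C, hx0δ⟩ := hCne
      have hβD : β ∈ D := by
        by_contra hβD
        have h2' := h2 β hβΓ hβD (hδ0.trans hδβ)
        have hδle : δ ≤ sSup (D ∩ Iio β) := le_csSup ⟨β, fun y hy => hy.2.le⟩ ⟨hδD, hδβ⟩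
        have hinf : sInf (C β) ≤ x0 := csInf_le (OrderBot.bddBelow _) hx0C
        exact absurd ((hδle.trans h2').trans hinf) hx0δ.not_ge
      have hβcf : ν ≤ β.cof := by
        by_contra hβcf
        rw [not_le] at hβcf
        have hotp := h1 β hβΓ hβcf
        have hmkC : Cardinal.mk ↥(C β) < Cardinal.lift.{1} ν := by
          have hcard : (otp (C β)).card < Cardinal.lift.{1} ν := by
            refine Cardinal.lt_ord.1 ?_
            rwa [Cardinal.lift_ord] at hotp
          rwa [otp, Ordinal.card_type] at hcard
        have hmkC2 : Cardinal.mk ↥(C β ∩ Iio δ) < Cardinal.lift.{1} (max lam ν) :=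
          lt_of_le_of_lt (Cardinal.mk_le_mk_of_subset Set.inter_subset_left)
            (hmkC.trans_le (Cardinal.lift_le.2 (le_max_right lam ν)))
        have hbd := hbnd _ (fun x hx => hx.2) hmkC2
        rw [hβsup] at hbd
        exact lt_irrefl _ hbd
      exact Set.mem_iUnion₂.2 ⟨β, ⟨hβb, hβΓ, hβD, hβκ, hβcf⟩, hδC⟩
    have hsmk : Cardinal.mk ↥(b a ∩ (Γ ∩ (D ∩ {α | α < κ.ord ∧ ν ≤ α.cof}))) ≤
        Cardinal.lift.{1} χ := by
      refine le_trans (Cardinal.mk_le_mk_of_subset Set.inter_subset_left) ?_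
      rw [hbamk]
    obtain ⟨t, hst, htΓ', htmk⟩ := pad_exists hκℵ hΓ'mk Set.inter_subset_right hχκ hsmk
      (hsmk.trans_lt (Cardinal.lift_lt.2 (hχlam.trans hlamκ)))
    refine ⟨t, htΓ', htmk, hcovs.trans ?_⟩
    exact Set.biUnion_subset_biUnion_left hst
  choose bt hbt1 hbt2 hbt3 using hex
  refine ⟨Xp i0, fun α => if h : α < κ.ord then bt α h else ∅,
    (hXpX i0).trans hXsub, hXpmk i0, ?_, ?_⟩
  · intro α hα
    simp only [dif_pos hα]
    exact ⟨hbt1 α hα, hbt2 α hα⟩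
  · intro α hα
    simp only [dif_pos hα]
    exact hbt3 α hα

end Proof9Main

theorem statement9
    (κ : Cardinal.{0}) (hκreg : κ.IsRegular) (hκunc : Cardinal.aleph0 < κ)
    (Γ : Set Ordinal.{0}) (hΓ : Γ ⊆ Iio κ.ord)
    (C : Ordinal.{0} → Set Ordinal.{0}) (hC : IsCSeqOn Γ C)
    (D : Set Ordinal.{0}) (hD : IsClubIn D κ.ord)
    (ν : Cardinal.{0})
    (hstat : IsStationaryIn (Γ ∩ {α | α < κ.ord ∧ ν ≤ α.cof}) κ.ord)
    (h1 : ∀ β ∈ Γ, β.cof < ν → otp (C β) < Ordinal.lift.{1} ν.ord)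
    (h2 : ∀ β ∈ Γ, β ∉ D → 0 < β → sSup (D ∩ Iio β) ≤ sInf (C β)) :
    chiOfOn κ Γ C = chiOfOn κ (Γ ∩ (D ∩ {α | α < κ.ord ∧ ν ≤ α.cof})) C := by
  classical
  have hmono : ∀ χ : Cardinal.{0}, CSeqCovers κ (Γ ∩ (D ∩ {α | α < κ.ord ∧ ν ≤ α.cof})) C χ →
      CSeqCovers κ Γ C χ := by
    rintro χ ⟨Δ, b, hb1, hb2, hb3, hb4⟩
    exact ⟨Δ, b, hb1, hb2,
      fun α hα => ⟨(hb3 α hα).1.trans Set.inter_subset_left, (hb3 α hα).2⟩, hb4⟩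
  have hκcov : CSeqCovers κ (Γ ∩ (D ∩ {α | α < κ.ord ∧ ν ≤ α.cof})) C κ :=
    covers_of_covers κ hκreg hκunc Γ hΓ C hC D hD ν hstat h1 h2 κ le_rfl
      (Or.inl (Order.le_succ κ))
  have hne : {χ : Cardinal.{0} | χ ≤ κ ∧ CSeqCovers κ Γ C χ}.Nonempty :=
    ⟨κ, le_rfl, hmono κ hκcov⟩
  refine le_antisymm ?_ ?_
  · refine csInf_le_csInf (OrderBot.bddBelow _) ⟨κ, le_rfl, hκcov⟩ ?_
    rintro χ ⟨hχκ, hχcov⟩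
    exact ⟨hχκ, hmono χ hχcov⟩
  · have hmem := csInf_mem hne
    refine csInf_le (OrderBot.bddBelow _) ?_
    exact ⟨hmem.1, covers_of_covers κ hκreg hκunc Γ hΓ C hC D hD ν hstat h1 h2 _ hmem.1
      (Or.inr hmem.2)⟩

end CSeq
end
end

section
/- For every infinite cardinal λ there exists a C-sequence vec C over λ⁺ with χ(vec C) = cf(λ); in particular, cf(λ) ∈ spec(λ⁺). -/
noncomputable section

open Set

namespace CSeq

/- ### Auxiliary construction -/
section Aux
open Cardinal Ordinal

/-- successor ordinals -/
def SuccSet : Set Ordinal.{0} := {δ | ∃ γ, δ = γ + 1}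

/-- closure of a set of ordinals under suprema of bounded initial segments -/
def cl (S : Set Ordinal.{0}) : Set Ordinal.{0} :=
  S ∪ {δ | 0 < δ ∧ sSup (S ∩ Iio δ) = δ}

theorem subset_cl (S : Set Ordinal.{0}) : S ⊆ cl S := subset_union_left

theorem bddAbove_of_subset_Iio {S : Set Ordinal.{0}} {β : Ordinal.{0}}
    (h : S ⊆ Iio β) : BddAbove S := ⟨β, fun x hx => (h hx).le⟩

theorem sSup_Iio_limit {β : Ordinal.{0}} (h : Order.IsSuccLimit β) : sSup (Iio β) = β := by
  apply le_antisymm (csSup_le' fun x hx => le_of_lt hx)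
  by_contra hlt
  push_neg at hlt
  have h1 : sSup (Iio β) + 1 < β := h.succ_lt hlt
  have := le_csSup (bddAbove_of_subset_Iio (le_refl _)) (mem_Iio.2 h1)
  exact absurd this (by simp [Order.lt_succ_iff_not_isMax])

theorem sSup_Iio_succ (γ : Ordinal.{0}) : sSup (Iio (γ + 1)) = γ := by
  apply le_antisymm (csSup_le' fun x hx => Order.lt_succ_iff.1 (by simpa using hx))
  exact le_csSup (bddAbove_of_subset_Iio (le_refl _)) (by simp)

theorem pos_of_mem_clsup {S : Set Ordinal.{0}} {δ : Ordinal.{0}}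
    (h : δ ∈ cl S) (hδ : δ ∉ S) : 0 < δ ∧ sSup (S ∩ Iio δ) = δ := by
  rcases h with h | h
  · exact absurd h hδ
  · exact h

theorem exists_mem_between {S : Set Ordinal.{0}} {a δ : Ordinal.{0}}
    (hsup : sSup (S ∩ Iio δ) = δ) (ha : a < δ) : ∃ x ∈ S, a < x ∧ x < δ := by
  have hne : (S ∩ Iio δ).Nonempty := by
    rcases eq_empty_or_nonempty (S ∩ Iio δ) with h | h
    · rw [h, csSup_empty] at hsup
      exact absurd hsup (by intro hh; rw [← hh] at ha; exact (not_lt_of_ge (zero_le (a := a))) ha)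
    · exact h
  obtain ⟨x, hx, hxgt⟩ := exists_lt_of_lt_csSup hne (by rw [hsup]; exact ha)
  exact ⟨x, hx.1, hxgt, hx.2⟩

theorem cl_inter_Iio (S : Set Ordinal.{0}) (δ : Ordinal.{0}) :
    cl S ∩ Iio δ ⊆ cl (S ∩ Iio δ) := by
  rintro x ⟨hx, hxδ⟩
  rcases hx with hx | ⟨hx0, hxs⟩
  · exact Or.inl ⟨hx, hxδ⟩
  · refine Or.inr ⟨hx0, ?_⟩
    have : S ∩ Iio x = (S ∩ Iio δ) ∩ Iio x := by
      ext y
      simp only [mem_inter_iff, mem_Iio]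
      exact ⟨fun hy => ⟨⟨hy.1, lt_trans hy.2 hxδ⟩, hy.2⟩, fun hy => ⟨hy.1.1, hy.2⟩⟩
    rwa [← this]

theorem sSup_cl_le_sSup {S : Set Ordinal.{0}} {α : Ordinal.{0}} :
    sSup (cl S ∩ Iio α) ≤ sSup (S ∩ Iio α) := by
  apply csSup_le'
  intro y hy
  rcases hy.1 with hyS | ⟨_, hysup⟩
  · exact le_csSup (bddAbove_of_subset_Iio (fun z (hz : z ∈ S ∩ Iio α) => hz.2)) ⟨hyS, hy.2⟩
  · rw [← hysup]
    apply csSup_le_csSup' (bddAbove_of_subset_Iio (fun z (hz : z ∈ S ∩ Iio α) => hz.2))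
    intro z hz
    exact mem_inter hz.1 (mem_Iio.2 (lt_trans (mem_Iio.1 hz.2) (mem_Iio.1 hy.2)))

theorem isClosedIn_cl (S : Set Ordinal.{0}) (β : Ordinal.{0}) :
    CSeq.IsClosedIn (cl S ∩ Iio β) β := by
  intro α hαβ hα0 hsup
  have hss : cl S ∩ Iio β ∩ Iio α = cl S ∩ Iio α := by
    ext y
    refine ⟨fun hy => ⟨hy.1.1, hy.2⟩, fun hy => ⟨⟨hy.1, lt_trans hy.2 hαβ⟩, hy.2⟩⟩
  rw [hss] at hsup
  have hle1 : sSup (S ∩ Iio α) ≤ α := csSup_le' fun x hx => le_of_lt hx.2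
  have hge : α ≤ sSup (S ∩ Iio α) := by
    calc α = sSup (cl S ∩ Iio α) := hsup.symm
    _ ≤ sSup (S ∩ Iio α) := sSup_cl_le_sSup
  exact ⟨Or.inr ⟨hα0, le_antisymm hle1 hge⟩, hαβ⟩

theorem mk_cl_le (S : Set Ordinal.{0}) {β : Ordinal.{0}} (hS : S ⊆ Iio β) :
    Cardinal.mk (cl S) ≤ Cardinal.mk S + Cardinal.mk S + 1 := by
  classical
  have hbdd : BddAbove S := bddAbove_of_subset_Iio hS
  set D : Set Ordinal.{0} := {δ | δ ∈ cl S ∧ δ ∉ S ∧ δ < sSup S} with hD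
  have hsub : cl S ⊆ S ∪ D ∪ {sSup S} := by
    intro x hx
    by_cases hxS : x ∈ S
    · exact Or.inl (Or.inl hxS)
    · obtain ⟨hx0, hxsup⟩ := pos_of_mem_clsup hx hxS
      rcases lt_or_eq_of_le (le_trans (le_of_eq hxsup.symm)
          (csSup_le_csSup' hbdd (fun z hz => hz.1))) with hlt | heq
      · exact Or.inl (Or.inr ⟨hx, hxS, hlt⟩)
      · exact Or.inr heq
  -- map each δ ∈ D to the least element of S that is ≥ δ
  have hfun : ∀ δ ∈ D, sInf (S ∩ Ici δ) ∈ S ∧ δ ≤ sInf (S ∩ Ici δ) := by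
    intro δ hδ
    have hne : (S ∩ Ici δ).Nonempty := by
      have hlt := hδ.2.2
      have hSne : S.Nonempty := by
        rcases eq_empty_or_nonempty S with h | h
        · rw [h, csSup_empty] at hlt
          exact absurd hlt (not_lt_of_ge (zero_le (a := δ)))
        · exact h
      obtain ⟨x, hxS, hx⟩ := exists_lt_of_lt_csSup hSne hlt
      exact ⟨x, hxS, hx.le⟩
    exact ⟨(csInf_mem hne).1, (csInf_mem hne).2⟩
  have hmono : ∀ δ ∈ D, ∀ δ' ∈ D, δ < δ' → sInf (S ∩ Ici δ) < δ' := by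
    intro δ hδ δ' hδ' hlt
    obtain ⟨x, hxS, hax, hxδ'⟩ := exists_mem_between (pos_of_mem_clsup hδ'.1 hδ'.2.1).2 hlt
    calc sInf (S ∩ Ici δ) ≤ x := csInf_le (OrderBot.bddBelow _) ⟨hxS, hax.le⟩
    _ < δ' := hxδ'
  have hinj : Set.InjOn (fun δ => sInf (S ∩ Ici δ)) D := by
    intro a ha b hb hab
    simp only at hab
    by_contra hne
    rcases lt_or_gt_of_ne hne with h | h
    · have := (hmono a ha b hb h).trans_le (hfun b hb).2
      rw [hab] at this
      exact lt_irrefl _ this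
    · have := (hmono b hb a ha h).trans_le (hfun a ha).2
      rw [← hab] at this
      exact lt_irrefl _ this
  have hmkD : Cardinal.mk D ≤ Cardinal.mk S := by
    have h1 : Cardinal.mk D = Cardinal.mk ((fun δ => sInf (S ∩ Ici δ)) '' D) :=
      (Cardinal.mk_image_eq_of_injOn _ D hinj).symm
    rw [h1]
    apply Cardinal.mk_le_mk_of_subset
    rintro x ⟨δ, hδ, rfl⟩
    exact (hfun δ hδ).1
  calc Cardinal.mk (cl S) ≤ Cardinal.mk ((S ∪ D ∪ {sSup S} : Set Ordinal.{0})) :=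
        Cardinal.mk_le_mk_of_subset hsub
    _ ≤ Cardinal.mk ((S ∪ D : Set Ordinal.{0})) + Cardinal.mk ({sSup S} : Set Ordinal.{0}) :=
        Cardinal.mk_union_le _ _
    _ ≤ Cardinal.mk S + Cardinal.mk D + 1 := by
        gcongr
        · exact Cardinal.mk_union_le _ _
        · simp
    _ ≤ Cardinal.mk S + Cardinal.mk S + 1 := by gcongr

end Aux
section Construction
open Cardinal Ordinal

/-- `λ⁺` as an ordinal. -/
def ko (lam : Cardinal.{0}) : Ordinal.{0} := (Order.succ lam).ord
/-- `λ` as an ordinal. -/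
def LL (lam : Cardinal.{0}) : Ordinal.{0} := lam.ord

theorem LL_lt_ko (lam : Cardinal.{0}) : LL lam < ko lam :=
  Cardinal.ord_lt_ord.2 (Order.lt_succ lam)

theorem LL_isLimit {lam : Cardinal.{0}} (hlam : ℵ₀ ≤ lam) : Order.IsSuccLimit (LL lam) :=
  Cardinal.isSuccLimit_ord hlam

theorem ko_isLimit {lam : Cardinal.{0}} (hlam : ℵ₀ ≤ lam) : Order.IsSuccLimit (ko lam) :=
  Cardinal.isSuccLimit_ord (hlam.trans (Order.le_succ lam))

theorem LL_pos {lam : Cardinal.{0}} (hlam : ℵ₀ ≤ lam) : 0 < LL lam :=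
  (LL_isLimit hlam).pos

theorem lt_ko_iff {lam : Cardinal.{0}} {β : Ordinal.{0}} : β < ko lam ↔ β.card ≤ lam := by
  rw [ko, Cardinal.lt_ord, Order.lt_succ_iff]

theorem card_LL (lam : Cardinal.{0}) : (LL lam).card = lam := Cardinal.card_ord lam

theorem cof_LL_le {lam : Cardinal.{0}} : (LL lam).cof ≤ lam := by
  have := Ordinal.cof_le_card (LL lam)
  rwa [card_LL] at this

def code (lam : Cardinal.{0}) (α i : Ordinal.{0}) : Ordinal.{0} :=
  LL lam * (α + 1) + Ordinal.omega0 * (i + 1)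

theorem code_eq_add_omega0 (lam : Cardinal.{0}) (α i : Ordinal.{0}) :
    code lam α i = (LL lam * (α + 1) + Ordinal.omega0 * i) + Ordinal.omega0 := by
  rw [code, add_assoc]
  congr 1
  rw [mul_add, mul_one]

theorem code_isLimit (lam : Cardinal.{0}) (α i : Ordinal.{0}) : Order.IsSuccLimit (code lam α i) := by
  rw [code_eq_add_omega0]
  exact Ordinal.isSuccLimit_add _ Ordinal.isSuccLimit_omega0

theorem lt_code {lam : Cardinal.{0}} (hlam : ℵ₀ ≤ lam) (α i : Ordinal.{0}) :
    α < code lam α i :=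
  lt_of_lt_of_le (lt_of_lt_of_le (Order.lt_succ α)
      (by rw [← Ordinal.add_one_eq_succ]; exact Ordinal.le_mul_right (α+1) (LL_pos hlam)))
    le_self_add

theorem code_lt_ko {lam : Cardinal.{0}} (hlam : ℵ₀ ≤ lam) {α i : Ordinal.{0}}
    (hα : α < ko lam) (hi : i.card < lam) : code lam α i < ko lam := by
  rw [lt_ko_iff]
  rw [code]
  apply le_trans (Ordinal.card_add _ _).le
  have h1 : (LL lam * (α + 1)).card ≤ lam := by
    rw [Ordinal.card_mul, card_LL]
    calc lam * (α+1).card ≤ lam * lam := by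
          apply mul_le_mul_right
          rw [← lt_ko_iff]
          exact (ko_isLimit hlam).succ_lt hα
    _ = lam := Cardinal.mul_eq_self hlam
  have h2 : (Ordinal.omega0 * (i + 1)).card ≤ lam := by
    rw [Ordinal.card_mul, Ordinal.card_omega0]
    calc ℵ₀ * (i+1).card ≤ lam * lam := by
          apply mul_le_mul' hlam
          rw [Ordinal.card_add, Ordinal.card_one]
          exact (Cardinal.add_lt_of_lt hlam hi (lt_of_lt_of_le Cardinal.one_lt_aleph0 hlam)).le
    _ = lam := Cardinal.mul_eq_self hlam
  calc (LL lam * (α + 1)).card + (Ordinal.omega0 * (i + 1)).card ≤ lam + lam := add_le_add h1 h2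
  _ = lam := Cardinal.add_eq_self hlam

theorem code_inj {lam : Cardinal.{0}} (hlam : ℵ₀ ≤ lam) {α i α' i' : Ordinal.{0}}
    (hi : Ordinal.omega0 * (i + 1) < LL lam) (hi' : Ordinal.omega0 * (i' + 1) < LL lam)
    (h : code lam α i = code lam α' i') : α = α' ∧ i = i' := by
  have hL0 : LL lam ≠ 0 := (LL_pos hlam).ne'
  have hdiv : ∀ a b : Ordinal.{0}, Ordinal.omega0 * (b + 1) < LL lam →
      (LL lam * (a + 1) + Ordinal.omega0 * (b + 1)) / LL lam = a + 1 := by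
    intro a b hb
    rw [Ordinal.mul_add_div _ hL0, Ordinal.div_eq_zero_of_lt hb, add_zero]
  have hα : α + 1 = α' + 1 := by
    have h' := h
    simp only [code] at h'
    rw [← hdiv α i hi, ← hdiv α' i' hi', h']
  have hαeq : α = α' := by
    have := hα
    rwa [Ordinal.add_one_eq_succ, Ordinal.add_one_eq_succ, Order.succ_eq_succ_iff] at this
  refine ⟨hαeq, ?_⟩
  have hrem : Ordinal.omega0 * (i + 1) = Ordinal.omega0 * (i' + 1) := by
    have h2 := h
    rw [code, code, hαeq] at h2
    exact (add_right_inj _).1 h2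
  have : i + 1 = i' + 1 := by
    by_contra hne
    rcases lt_or_gt_of_ne hne with hlt | hlt
    · exact absurd hrem (ne_of_lt ((mul_lt_mul_iff_right₀ Ordinal.omega0_pos).2 hlt))
    · exact absurd hrem.symm (ne_of_lt ((mul_lt_mul_iff_right₀ Ordinal.omega0_pos).2 hlt))
  rwa [Ordinal.add_one_eq_succ, Ordinal.add_one_eq_succ, Order.succ_eq_succ_iff] at this

/-- existence of a system of fundamental sequences -/
theorem exists_fs : ∃ fs : Ordinal.{0} → Ordinal.{0} → Ordinal.{0},
    ∀ β : Ordinal.{0}, Order.IsSuccLimit β →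
      (∀ i, i < β.cof.ord → fs β i < β) ∧
      (∀ i j, i < j → j < β.cof.ord → fs β i < fs β j) ∧
      (∀ ξ, ξ < β → ∃ i, i < β.cof.ord ∧ ξ < fs β i) := by
  have H : ∀ β : Ordinal.{0}, ∃ g : Ordinal.{0} → Ordinal.{0}, Order.IsSuccLimit β →
      (∀ i, i < β.cof.ord → g i < β) ∧
      (∀ i j, i < j → j < β.cof.ord → g i < g j) ∧
      (∀ ξ, ξ < β → ∃ i, i < β.cof.ord ∧ ξ < g i) := by
    intro β
    obtain ⟨f, hf⟩ := Ordinal.exists_fundamental_sequence β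
    classical
    refine ⟨fun i => if h : i < β.cof.ord then f i h else 0, fun hβ => ⟨?_, ?_, ?_⟩⟩
    · intro i hi
      dsimp only
      rw [dif_pos hi]
      exact hf.lt hi
    · intro i j hij hj
      dsimp only
      rw [dif_pos hj, dif_pos (hij.trans hj)]
      exact hf.2.1 _ _ hij
    · intro ξ hξ
      have hξ1 : ξ + 1 < β := hβ.succ_lt hξ
      have : ξ + 1 < Ordinal.blsub _ f := by rw [hf.blsub_eq]; exact hξ1
      obtain ⟨i, hi, hle⟩ := Ordinal.lt_blsub_iff.1 this
      refine ⟨i, hi, ?_⟩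
      dsimp only
      rw [dif_pos hi]
      rw [Ordinal.add_one_eq_succ] at hle
      exact lt_of_lt_of_le (Order.lt_succ ξ) hle
  choose F hF using H
  exact ⟨F, hF⟩

/-- existence of a system of surjections `λ → α` -/
theorem exists_sur {lam : Cardinal.{0}} (hlam : ℵ₀ ≤ lam) :
    ∃ sur : Ordinal.{0} → Ordinal.{0} → Ordinal.{0},
      ∀ α, LL lam ≤ α → α < ko lam →
        (∀ ξ, ξ < LL lam → sur α ξ < α) ∧
        (∀ δ, δ < α → ∃ ξ, ξ < LL lam ∧ sur α ξ = δ) := by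
  classical
  have H : ∀ α : Ordinal.{0}, ∃ g : Ordinal.{0} → Ordinal.{0}, LL lam ≤ α → α < ko lam →
      (∀ ξ, ξ < LL lam → g ξ < α) ∧ (∀ δ, δ < α → ∃ ξ, ξ < LL lam ∧ g ξ = δ) := by
    intro α
    by_cases hα : LL lam ≤ α ∧ α < ko lam
    · have hmk : Cardinal.mk (Iio α) ≤ Cardinal.mk (Iio (LL lam)) := by
        rw [Cardinal.mk_Iio_ordinal, Cardinal.mk_Iio_ordinal, Cardinal.lift_le, card_LL]
        exact lt_ko_iff.1 hα.2
      obtain ⟨emb⟩ := (Cardinal.le_def _ _).1 hmk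
      have hne : Nonempty (Iio α) := ⟨⟨0, lt_of_lt_of_le (LL_pos hlam) hα.1⟩⟩
      set inv : (Iio (LL lam)) → (Iio α) := Function.invFun (fun x => emb x) with hinv
      have hsurj : Function.Surjective inv :=
        Function.invFun_surjective (fun a b hab => emb.injective hab)
      refine ⟨fun ξ => if hξ : ξ < LL lam then (inv ⟨ξ, hξ⟩ : Ordinal) else 0,
        fun _ _ => ⟨?_, ?_⟩⟩
      · intro ξ hξ
        dsimp only
        rw [dif_pos hξ]
        exact (inv ⟨ξ, hξ⟩).2
      · intro δ hδ
        obtain ⟨⟨ξ, hξ⟩, hp⟩ := hsurj ⟨δ, hδ⟩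
        refine ⟨ξ, hξ, ?_⟩
        dsimp only
        rw [dif_pos (mem_Iio.1 hξ)]
        exact congrArg Subtype.val hp
    · exact ⟨fun _ => 0, fun h1 h2 => absurd ⟨h1, h2⟩ hα⟩
  choose F hF using H
  exact ⟨F, fun α h1 h2 => hF α h1 h2⟩

end Construction
section SeqC
open Cardinal Ordinal
open scoped Classical

variable (lam : Cardinal.{0}) (sur fs : Ordinal.{0} → Ordinal.{0} → Ordinal.{0})

def Xset (α i : Ordinal.{0}) : Set Ordinal.{0} :=
  SuccSet ∩ Iio α ∩ (sur α '' Iio (fs (LL lam) i))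

def Coded (β : Ordinal.{0}) : Prop :=
  ∃ p : Ordinal.{0} × Ordinal.{0}, (LL lam ≤ p.1 ∧ p.1 < ko lam) ∧
    (p.2 < (LL lam).cof.ord ∧ Ordinal.omega0 * (p.2 + 1) < LL lam) ∧ β = code lam p.1 p.2

def Sgen (β : Ordinal.{0}) : Set Ordinal.{0} :=
  if h : Coded lam β then
    Xset lam sur fs h.choose.1 h.choose.2 ∪
      Ioo (LL lam * (h.choose.1 + 1) + Ordinal.omega0 * h.choose.2) β
  else fs β '' Iio β.cof.ord

def seqC (β : Ordinal.{0}) : Set Ordinal.{0} :=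
  if Order.IsSuccLimit β then cl (Sgen lam sur fs β) ∩ Iio β
  else if β = 0 then ∅ else {sSup (Iio β)}

/-- the hypotheses on the fundamental sequence system -/
def HFS : Prop :=
  ∀ β : Ordinal.{0}, Order.IsSuccLimit β →
    (∀ i, i < β.cof.ord → fs β i < β) ∧
    (∀ i j, i < j → j < β.cof.ord → fs β i < fs β j) ∧
    (∀ ξ, ξ < β → ∃ i, i < β.cof.ord ∧ ξ < fs β i)

/-- the hypotheses on the surjection system -/
def HSUR : Prop :=
  ∀ α, LL lam ≤ α → α < ko lam →
    (∀ ξ, ξ < LL lam → sur α ξ < α) ∧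
    (∀ δ, δ < α → ∃ ξ, ξ < LL lam ∧ sur α ξ = δ)

variable {lam sur fs}

theorem gamma_lt_code {A i : Ordinal.{0}} :
    LL lam * (A + 1) + Ordinal.omega0 * i < code lam A i := by
  rw [code]
  exact add_lt_add_right ((mul_lt_mul_iff_right₀ Ordinal.omega0_pos).2 (Order.lt_succ i)) _

theorem code_eq_gamma_add (lam : Cardinal.{0}) (A i : Ordinal.{0}) :
    code lam A i = (LL lam * (A + 1) + Ordinal.omega0 * i) + Ordinal.omega0 :=
  code_eq_add_omega0 lam A i

theorem Sgen_unbounded (hfs : HFS fs) {β : Ordinal.{0}} (hβ : Order.IsSuccLimit β) :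
    ∀ δ, δ < β → ∃ x ∈ Sgen lam sur fs β, δ ≤ x ∧ x < β := by
  intro δ hδ
  rw [Sgen]
  by_cases h : Coded lam β
  · rw [dif_pos h]
    set γ := LL lam * (h.choose.1 + 1) + Ordinal.omega0 * h.choose.2 with hγ
    have hγβ : γ < β := by
      rw [h.choose_spec.2.2]
      exact gamma_lt_code
    refine ⟨max δ (γ + 1), Or.inr ⟨?_, ?_⟩, le_max_left _ _, ?_⟩
    · exact lt_of_lt_of_le (Order.lt_succ γ) (by rw [← Ordinal.add_one_eq_succ]; exact le_max_right _ _)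
    · exact max_lt hδ (hβ.succ_lt hγβ)
    · exact max_lt hδ (hβ.succ_lt hγβ)
  · rw [dif_neg h]
    obtain ⟨i, hi, hlt⟩ := (hfs β hβ).2.2 δ hδ
    exact ⟨fs β i, ⟨i, hi, rfl⟩, hlt.le, (hfs β hβ).1 i hi⟩

theorem seqC_limit_eq {β : Ordinal.{0}} (hβ : Order.IsSuccLimit β) :
    seqC lam sur fs β = cl (Sgen lam sur fs β) ∩ Iio β := by
  rw [seqC, if_pos hβ]

theorem sSup_seqC_limit (hfs : HFS fs) {β : Ordinal.{0}} (hβ : Order.IsSuccLimit β) :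
    sSup (seqC lam sur fs β) = β := by
  rw [seqC_limit_eq hβ]
  apply le_antisymm (csSup_le' fun x hx => (mem_Iio.1 hx.2).le)
  by_contra hlt
  push_neg at hlt
  have h1 : sSup (cl (Sgen lam sur fs β) ∩ Iio β) + 1 < β := hβ.succ_lt hlt
  obtain ⟨x, hx, hle, hxβ⟩ := Sgen_unbounded hfs hβ _ h1
  have : x ≤ sSup (cl (Sgen lam sur fs β) ∩ Iio β) :=
    le_csSup (bddAbove_of_subset_Iio fun z (hz : z ∈ _ ∩ Iio β) => hz.2)
      ⟨subset_cl _ hx, hxβ⟩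
  have h2 := le_trans hle this
  rw [Ordinal.add_one_eq_succ] at h2
  exact absurd h2 (by simp)

theorem seqC_isCSeq (hlam : ℵ₀ ≤ lam) (hfs : HFS fs) :
    CSeq.IsCSeq (ko lam) (seqC lam sur fs) := by
  intro β _
  rcases Ordinal.zero_or_succ_or_isSuccLimit β with rfl | ⟨a, rfl⟩ | hβ
  · have he : seqC lam sur fs 0 = ∅ := by
      rw [seqC, if_neg Ordinal.not_isSuccLimit_zero, if_pos rfl]
    rw [he]
    refine ⟨empty_subset _, fun α hα hα0 hsup => ?_, ?_⟩
    · rw [Set.empty_inter, csSup_empty] at hsup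
      exact absurd hsup.symm (by simpa using hα0.ne')
    · rw [csSup_empty]
      have : Iio (0 : Ordinal.{0}) = ∅ := by ext x; simp
      rw [this, csSup_empty]
  · rw [← Ordinal.add_one_eq_succ]
    have he : seqC lam sur fs (a + 1) = {a} := by
      rw [seqC, if_neg (by rw [Ordinal.add_one_eq_succ]; exact Order.not_isSuccLimit_succ a),
        if_neg (by rw [Ordinal.add_one_eq_succ]; exact (Order.succ_ne_bot a)), sSup_Iio_succ]
    rw [he]
    refine ⟨by simp [Order.lt_succ_iff], fun α hα hα0 hsup => ?_, ?_⟩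
    · have : ({a} : Set Ordinal.{0}) ∩ Iio α = ∅ := by
        ext x
        simp only [mem_inter_iff, mem_singleton_iff, mem_Iio, mem_empty_iff_false, iff_false,
          not_and]
        rintro rfl h
        rw [Ordinal.add_one_eq_succ, Order.lt_succ_iff] at hα
        exact absurd hα (not_le.2 h)
      rw [this, csSup_empty] at hsup
      exact absurd hsup.symm (by simpa using hα0.ne')
    · rw [csSup_singleton, sSup_Iio_succ]
  · refine ⟨fun x hx => (seqC_limit_eq hβ ▸ hx).2, ?_, ?_⟩
    · rw [seqC_limit_eq hβ]
      exact isClosedIn_cl _ _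
    · rw [sSup_seqC_limit hfs hβ, sSup_Iio_limit hβ]
end SeqC
section Invariant
open Cardinal Ordinal
open scoped Classical

variable {lam : Cardinal.{0}} {sur fs : Ordinal.{0} → Ordinal.{0} → Ordinal.{0}}

theorem lift_aleph0_le (hlam : ℵ₀ ≤ lam) : ℵ₀ ≤ Cardinal.lift.{1} lam := by
  rw [← Cardinal.lift_aleph0.{1,0}]
  exact Cardinal.lift_le.2 hlam

theorem one_lt_lift (hlam : ℵ₀ ≤ lam) : 1 < Cardinal.lift.{1} lam :=
  lt_of_lt_of_le Cardinal.one_lt_aleph0 (lift_aleph0_le hlam)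

theorem mk_Iio_lt_lift {o : Ordinal.{0}} (h : o < LL lam) :
    Cardinal.mk (Iio o) < Cardinal.lift.{1} lam := by
  rw [Cardinal.mk_Iio_ordinal, Cardinal.lift_lt]
  exact Cardinal.lt_ord.1 h

theorem mk_Sgen_inter_lt (hlam : ℵ₀ ≤ lam) (hfs : HFS fs) (hsur : HSUR lam sur)
    {β δ : Ordinal.{0}} (hβ : Order.IsSuccLimit β) (hβko : β < ko lam) (hδ : δ < β) :
    Cardinal.mk ((Sgen lam sur fs β ∩ Iio δ : Set Ordinal.{0})) < Cardinal.lift.{1} lam := by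
  rw [Sgen]
  by_cases h : Coded lam β
  · rw [dif_pos h]
    obtain ⟨⟨hA, hAko⟩, ⟨hi, hωi⟩, hβeq⟩ := h.choose_spec
    set A := h.choose.1
    set i := h.choose.2
    set γ := LL lam * (A + 1) + Ordinal.omega0 * i with hγ
    have haleph : Ordinal.omega0 < LL lam :=
      lt_of_le_of_lt (Ordinal.le_mul_left Ordinal.omega0 (lt_of_lt_of_le zero_lt_one le_add_self)) hωi
    have hX : Cardinal.mk (Xset lam sur fs A i) < Cardinal.lift.{1} lam := by
      have hfsi : fs (LL lam) i < LL lam := (hfs (LL lam) (LL_isLimit hlam)).1 i hi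
      calc Cardinal.mk (Xset lam sur fs A i)
          ≤ Cardinal.mk (sur A '' Iio (fs (LL lam) i)) :=
            Cardinal.mk_le_mk_of_subset (fun x hx => hx.2)
        _ ≤ Cardinal.mk (Iio (fs (LL lam) i)) := Cardinal.mk_image_le
        _ < Cardinal.lift.{1} lam := mk_Iio_lt_lift hfsi
    have hT : Cardinal.mk (Ioo γ β) < Cardinal.lift.{1} lam := by
      have hsub : Ioo γ β ⊆ (fun s => γ + s) '' Iio Ordinal.omega0 := by
        rintro x ⟨hγx, hxβ⟩
        refine ⟨x - γ, ?_, Ordinal.add_sub_cancel_of_le hγx.le⟩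
        rw [mem_Iio]
        by_contra hge
        push_neg at hge
        have h1 : γ + Ordinal.omega0 ≤ γ + (x - γ) := add_le_add_right hge γ
        rw [Ordinal.add_sub_cancel_of_le hγx.le] at h1
        have hβγ : β = γ + Ordinal.omega0 := by
          rw [hβeq, code_eq_gamma_add, hγ]
        rw [hβγ] at hxβ
        exact absurd (lt_of_le_of_lt h1 hxβ) (lt_irrefl _)
      calc Cardinal.mk (Ioo γ β) ≤ Cardinal.mk ((fun s => γ + s) '' Iio Ordinal.omega0) :=
            Cardinal.mk_le_mk_of_subset hsub
        _ ≤ Cardinal.mk (Iio Ordinal.omega0) := Cardinal.mk_image_le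
        _ < Cardinal.lift.{1} lam := mk_Iio_lt_lift haleph
    calc Cardinal.mk ↥((Xset lam sur fs A i ∪ Ioo γ β) ∩ Iio δ)
        ≤ Cardinal.mk ((Xset lam sur fs A i ∪ Ioo γ β : Set Ordinal.{0})) :=
          Cardinal.mk_le_mk_of_subset inter_subset_left
      _ ≤ Cardinal.mk (Xset lam sur fs A i) + Cardinal.mk (Ioo γ β) := Cardinal.mk_union_le _ _
      _ < Cardinal.lift.{1} lam := Cardinal.add_lt_of_lt (lift_aleph0_le hlam) hX hT
  · rw [dif_neg h]
    obtain ⟨i₀, hi₀, hδlt⟩ := (hfs β hβ).2.2 δ hδ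
    have hsub : fs β '' Iio β.cof.ord ∩ Iio δ ⊆ fs β '' Iio i₀ := by
      rintro x ⟨⟨i, hi, rfl⟩, hxδ⟩
      refine ⟨i, ?_, rfl⟩
      rw [mem_Iio]
      by_contra hge
      push_neg at hge
      rcases lt_or_eq_of_le hge with hlt | heq
      · exact absurd (lt_trans (lt_trans hδlt ((hfs β hβ).2.1 i₀ i hlt hi)) hxδ) (lt_irrefl δ)
      · rw [← heq] at hxδ
        exact absurd (lt_trans hδlt hxδ) (lt_irrefl δ)
    calc Cardinal.mk ↥(fs β '' Iio β.cof.ord ∩ Iio δ) ≤ Cardinal.mk (fs β '' Iio i₀) :=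
          Cardinal.mk_le_mk_of_subset hsub
      _ ≤ Cardinal.mk (Iio i₀) := Cardinal.mk_image_le
      _ < Cardinal.lift.{1} lam := by
          rw [Cardinal.mk_Iio_ordinal, Cardinal.lift_lt]
          calc i₀.card < β.cof := Cardinal.lt_ord.1 hi₀
            _ ≤ β.card := Ordinal.cof_le_card β
            _ ≤ lam := lt_ko_iff.1 hβko

theorem seqC_inv (hlam : ℵ₀ ≤ lam) (hfs : HFS fs) (hsur : HSUR lam sur)
    {β : Ordinal.{0}} (hβko : β < ko lam) {δ : Ordinal.{0}}
    (hδ : δ < sSup (seqC lam sur fs β)) :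
    Cardinal.mk ((seqC lam sur fs β ∩ Iio δ : Set Ordinal.{0})) < Cardinal.lift.{1} lam := by
  rcases Ordinal.zero_or_succ_or_isSuccLimit β with rfl | ⟨a, rfl⟩ | hβ
  · exfalso
    have he : seqC lam sur fs 0 = ∅ := by
      rw [seqC, if_neg Ordinal.not_isSuccLimit_zero, if_pos rfl]
    rw [he, csSup_empty] at hδ
    exact absurd hδ (by simp)
  · have he : seqC lam sur fs (Order.succ a) = {a} := by
      rw [seqC, if_neg (Order.not_isSuccLimit_succ a), if_neg (Ordinal.succ_ne_zero a),
        ← Ordinal.add_one_eq_succ, sSup_Iio_succ]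
    rw [he]
    calc Cardinal.mk ↥(({a} : Set Ordinal.{0}) ∩ Iio δ)
        ≤ Cardinal.mk ({a} : Set Ordinal.{0}) := Cardinal.mk_le_mk_of_subset inter_subset_left
      _ = 1 := Cardinal.mk_singleton a
      _ < Cardinal.lift.{1} lam := one_lt_lift hlam
  · rw [sSup_seqC_limit hfs hβ] at hδ
    have hsub : seqC lam sur fs β ∩ Iio δ ⊆ cl (Sgen lam sur fs β ∩ Iio δ) := by
      intro x hx
      rw [seqC_limit_eq hβ] at hx
      exact cl_inter_Iio _ _ ⟨hx.1.1, hx.2⟩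
    have hmk := mk_Sgen_inter_lt hlam hfs hsur hβ hβko hδ
    calc Cardinal.mk ↥(seqC lam sur fs β ∩ Iio δ)
        ≤ Cardinal.mk (cl (Sgen lam sur fs β ∩ Iio δ)) := Cardinal.mk_le_mk_of_subset hsub
      _ ≤ Cardinal.mk ↥(Sgen lam sur fs β ∩ Iio δ) + Cardinal.mk ↥(Sgen lam sur fs β ∩ Iio δ) + 1 :=
          mk_cl_le _ (fun x (hx : x ∈ _ ∩ Iio δ) => hx.2)
      _ < Cardinal.lift.{1} lam := by
          apply Cardinal.add_lt_of_lt (lift_aleph0_le hlam)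
          · exact Cardinal.add_lt_of_lt (lift_aleph0_le hlam) hmk hmk
          · exact one_lt_lift hlam

theorem Xset_subset_seqC (hlam : ℵ₀ ≤ lam) {A i : Ordinal.{0}}
    (hA : LL lam ≤ A) (hAko : A < ko lam) (hi : i < (LL lam).cof.ord)
    (hωi : Ordinal.omega0 * (i + 1) < LL lam) :
    Xset lam sur fs A i ⊆ seqC lam sur fs (code lam A i) := by
  have h : Coded lam (code lam A i) := ⟨(A, i), ⟨hA, hAko⟩, ⟨hi, hωi⟩, rfl⟩
  have heq := code_inj hlam h.choose_spec.2.1.2 hωi h.choose_spec.2.2.symm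
  intro x hx
  rw [seqC_limit_eq (code_isLimit lam A i)]
  refine ⟨subset_cl _ ?_, mem_Iio.2 (lt_trans hx.1.2 (lt_code hlam A i))⟩
  rw [Sgen, dif_pos h]
  left
  rw [heq.1, heq.2]
  exact hx

end Invariant
section Covering
open Cardinal Ordinal
open scoped Classical

variable {lam : Cardinal.{0}} {sur fs : Ordinal.{0} → Ordinal.{0} → Ordinal.{0}}

theorem seqC_succ_eq (a : Ordinal.{0}) : seqC lam sur fs (a + 1) = {a} := by
  rw [seqC, if_neg (by rw [Ordinal.add_one_eq_succ]; exact Order.not_isSuccLimit_succ a),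
    if_neg (by rw [Ordinal.add_one_eq_succ]; exact Ordinal.succ_ne_zero a), sSup_Iio_succ]

theorem succ_injOn (s : Set Ordinal.{0}) : Set.InjOn (fun δ : Ordinal.{0} => δ + 1) s := by
  intro a _ b _ hab
  simp only [Ordinal.add_one_eq_succ] at hab
  exact Order.succ_eq_succ_iff.1 hab

theorem homega (hω : ℵ₀ < lam) {i : Ordinal.{0}} (hi : i < (LL lam).cof.ord) :
    Ordinal.omega0 * (i + 1) < LL lam := by
  rw [LL, Cardinal.lt_ord, Ordinal.card_mul, Ordinal.card_omega0, Ordinal.card_add,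
    Ordinal.card_one]
  have hcard : i.card < lam :=
    lt_of_lt_of_le (lt_of_lt_of_le (Cardinal.lt_ord.1 hi) (Ordinal.cof_le_card _))
      (by rw [card_LL])
  exact Cardinal.mul_lt_of_lt hω.le hω
    (Cardinal.add_lt_of_lt hω.le hcard (lt_trans Cardinal.one_lt_aleph0 hω))

theorem covers (hlam : ℵ₀ ≤ lam) (hfs : HFS fs) (hsur : HSUR lam sur) :
    CSeq.CSeqCovers (Order.succ lam) (Iio (ko lam)) (seqC lam sur fs) (LL lam).cof := by
  have hko : (Order.succ lam).ord = ko lam := rfl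
  rcases eq_or_lt_of_le hlam with heq | hω
  · -- λ = ℵ₀ : cover by singletons
    have hcof : (LL lam).cof = lam := by
      rw [LL, ← heq, Cardinal.ord_aleph0, Ordinal.cof_omega0]
    refine ⟨Iio (ko lam), fun α => (fun δ : Ordinal.{0} => δ + 1) '' Iio (max α (LL lam)),
      by rw [hko], ?_, ?_, ?_⟩
    · rw [CSeq.MkEq, Cardinal.mk_Iio_ordinal, ko, Cardinal.card_ord]
    · intro α hα
      rw [hko] at hα
      have hmax : max α (LL lam) < ko lam := max_lt hα (LL_lt_ko lam)
      constructor
      · rintro x ⟨δ, hδ, rfl⟩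
        exact mem_Iio.2 ((ko_isLimit hlam).succ_lt (lt_trans (mem_Iio.1 hδ) hmax))
      · rw [CSeq.MkEq, hcof, Cardinal.mk_image_eq_of_injOn _ _ (succ_injOn _),
          Cardinal.mk_Iio_ordinal, Cardinal.lift_inj]
        apply le_antisymm (lt_ko_iff.1 hmax)
        calc lam = (LL lam).card := (card_LL lam).symm
        _ ≤ (max α (LL lam)).card := Ordinal.card_le_card (le_max_right _ _)
    · intro α hα x hx
      rw [mem_iUnion₂]
      refine ⟨x + 1, ⟨x, mem_Iio.2 (lt_of_lt_of_le (mem_Iio.1 hx.2) (le_max_left _ _)), rfl⟩, ?_⟩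
      rw [seqC_succ_eq]
      exact rfl
  · -- ℵ₀ < λ : cover via the coded sets
    refine ⟨SuccSet ∩ Iio (ko lam),
      fun α => (fun i => code lam (max α (LL lam)) i) '' Iio (LL lam).cof.ord,
      by rw [hko]; exact inter_subset_right, ?_, ?_, ?_⟩
    · rw [CSeq.MkEq]
      apply le_antisymm
      · calc Cardinal.mk ↥(SuccSet ∩ Iio (ko lam))
            ≤ Cardinal.mk (Iio (ko lam)) := Cardinal.mk_le_mk_of_subset inter_subset_right
          _ = Cardinal.lift.{1} (Order.succ lam) := by
              rw [Cardinal.mk_Iio_ordinal, ko, Cardinal.card_ord]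
      · have hsub : (fun δ : Ordinal.{0} => δ + 1) '' Iio (ko lam) ⊆ SuccSet ∩ Iio (ko lam) := by
          rintro x ⟨δ, hδ, rfl⟩
          exact ⟨⟨δ, rfl⟩, (ko_isLimit hlam).succ_lt hδ⟩
        calc Cardinal.lift.{1} (Order.succ lam)
            = Cardinal.mk (Iio (ko lam)) := by rw [Cardinal.mk_Iio_ordinal, ko, Cardinal.card_ord]
          _ = Cardinal.mk ↥((fun δ : Ordinal.{0} => δ + 1) '' Iio (ko lam)) :=
              (Cardinal.mk_image_eq_of_injOn _ _ (succ_injOn _)).symm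
          _ ≤ Cardinal.mk ↥(SuccSet ∩ Iio (ko lam)) := Cardinal.mk_le_mk_of_subset hsub
    · intro α hα
      rw [hko] at hα
      have hmax : max α (LL lam) < ko lam := max_lt hα (LL_lt_ko lam)
      constructor
      · rintro x ⟨i, hi, rfl⟩
        exact mem_Iio.2 (code_lt_ko hlam hmax
          (lt_of_lt_of_le (lt_of_lt_of_le (Cardinal.lt_ord.1 (mem_Iio.1 hi))
            (Ordinal.cof_le_card _)) (by rw [card_LL])))
      · rw [CSeq.MkEq]
        have hinj : Set.InjOn (fun i => code lam (max α (LL lam)) i)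
            (Iio (LL lam).cof.ord) := by
          intro a ha b hb hab
          exact (code_inj hlam (homega hω ha) (homega hω hb) hab).2
        rw [Cardinal.mk_image_eq_of_injOn _ _ hinj, Cardinal.mk_Iio_ordinal, Cardinal.card_ord]
    · intro α hα x hx
      rw [hko] at hα
      set A := max α (LL lam) with hA
      have hmax : A < ko lam := max_lt hα (LL_lt_ko lam)
      have hxA : x < A := lt_of_lt_of_le (mem_Iio.1 hx.2) (le_max_left _ _)
      obtain ⟨ξ, hξ, hsx⟩ := (hsur A (le_max_right _ _) hmax).2 x hxA
      obtain ⟨i, hi, hξfs⟩ := (hfs (LL lam) (LL_isLimit hlam)).2.2 ξ hξ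
      rw [mem_iUnion₂]
      refine ⟨code lam A i, ⟨i, hi, rfl⟩, ?_⟩
      apply Xset_subset_seqC hlam (le_max_right _ _) hmax hi (homega hω hi)
      exact ⟨⟨hx.1.1, hxA⟩, ⟨ξ, hξfs, hsx⟩⟩

end Covering
section Lower
open Cardinal Ordinal
open scoped Classical

variable {lam : Cardinal.{0}} {sur fs : Ordinal.{0} → Ordinal.{0} → Ordinal.{0}}

theorem lt_add_one_ord (y : Ordinal.{0}) : y < y + 1 := by
  rw [Ordinal.add_one_eq_succ]; exact Order.lt_succ y

theorem lower_bound (hlam : ℵ₀ ≤ lam) (hfs : HFS fs) (hsur : HSUR lam sur)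
    {χ : Cardinal.{0}}
    (hχ : CSeq.CSeqCovers (Order.succ lam) (Iio (ko lam)) (seqC lam sur fs) χ) :
    (LL lam).cof ≤ χ := by
  by_contra hlt
  push_neg at hlt
  obtain ⟨Δ, b, hΔsub, hΔcard, hb, hcov⟩ := hχ
  rw [CSeq.MkEq] at hΔcard
  have hΔko : Δ ⊆ Iio (ko lam) := hΔsub
  -- the enumeration of Δ
  have hub : ¬ BddAbove (Δ ∪ Ici (ko lam)) := by
    rintro ⟨β₀, hβ₀⟩
    have hmem : max β₀ (ko lam) + 1 ∈ Δ ∪ Ici (ko lam) :=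
      Or.inr (le_trans (le_max_right _ _) (lt_add_one_ord _).le)
    have h1 : max β₀ (ko lam) + 1 ≤ β₀ := hβ₀ hmem
    exact absurd h1 (not_le.2 (lt_of_le_of_lt (le_max_left _ _) (lt_add_one_ord _)))
  set E := enumOrd (Δ ∪ Ici (ko lam)) with hE
  have hEmono : StrictMono E := enumOrd_strictMono hub
  have claim : ∀ o, o < ko lam → E o ∈ Δ ∧ E o < ko lam := by
    intro o ho
    have hEko : E o < ko lam := by
      by_contra hge
      push_neg at hge
      have hsub : Δ ⊆ E '' Iio o := by
        intro x hx
        have hxrange : x ∈ range E := by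
          rw [hE, range_enumOrd hub]
          exact Or.inl hx
        obtain ⟨o', rfl⟩ := hxrange
        exact ⟨o', hEmono.lt_iff_lt.1 (lt_of_lt_of_le (hΔko hx) hge), rfl⟩
      have h1 : Cardinal.lift.{1} (Order.succ lam) ≤ Cardinal.lift.{1} lam := by
        calc Cardinal.lift.{1} (Order.succ lam) = Cardinal.mk Δ := hΔcard.symm
          _ ≤ Cardinal.mk ↥(E '' Iio o) := Cardinal.mk_le_mk_of_subset hsub
          _ ≤ Cardinal.mk (Iio o) := Cardinal.mk_image_le
          _ = Cardinal.lift.{1} o.card := Cardinal.mk_Iio_ordinal o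
          _ ≤ Cardinal.lift.{1} lam := Cardinal.lift_le.2 (lt_ko_iff.1 ho)
      rw [Cardinal.lift_le] at h1
      exact absurd h1 (not_le.2 (Order.lt_succ lam))
    refine ⟨?_, hEko⟩
    rcases enumOrd_mem hub o with h | h
    · exact h
    · exact absurd hEko (not_lt.2 h)
  -- the blocks
  set ν : Cardinal.{0} := Order.succ χ with hν
  have hνcof : ν ≤ (LL lam).cof := Order.succ_le_of_lt hlt
  have hνlam : ν ≤ lam := hνcof.trans cof_LL_le
  have htopidx : LL lam * ν.ord < ko lam := by
    rw [lt_ko_iff, Ordinal.card_mul, card_LL, Cardinal.card_ord]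
    calc lam * ν ≤ lam * lam := mul_le_mul_right hνlam lam
      _ = lam := Cardinal.mul_eq_self hlam
  have hidx : ∀ j, j < ν.ord → ∀ η, η < LL lam → LL lam * j + η < LL lam * ν.ord := by
    intro j hj η hη
    calc LL lam * j + η < LL lam * j + LL lam := add_lt_add_right hη _
      _ = LL lam * (j + 1) := by rw [mul_add, mul_one]
      _ ≤ LL lam * ν.ord := by
          apply mul_le_mul_right
          rw [Ordinal.add_one_eq_succ, Order.succ_le_iff]
          exact hj
  set Dfun : Ordinal.{0} → Ordinal.{0} → Ordinal.{0} := fun j η => E (LL lam * j + η) with hDfun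
  set Dset : Ordinal.{0} → Set Ordinal.{0} := fun j => Dfun j '' Iio (LL lam) with hDset
  set αj : Ordinal.{0} → Ordinal.{0} := fun j => sSup (Dset j) with hαj
  have hDidx : ∀ j, j < ν.ord → ∀ η, η < LL lam → Dfun j η < E (LL lam * ν.ord) :=
    fun j hj η hη => hEmono (hidx j hj η hη)
  have hDko : ∀ j, j < ν.ord → ∀ η, η < LL lam → Dfun j η < ko lam := by
    intro j hj η hη
    exact lt_trans (hDidx j hj η hη) (claim _ htopidx).2
  have hDΔ : ∀ j, j < ν.ord → ∀ η, η < LL lam → Dfun j η ∈ Δ := by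
    intro j hj η hη
    exact (claim _ (lt_trans (hidx j hj η hη) htopidx)).1
  have hDbdd : ∀ j, BddAbove (Dset j) := by
    intro j
    refine ⟨E (LL lam * (j + 1)), ?_⟩
    rintro x ⟨η, hη, rfl⟩
    apply le_of_lt (hEmono _)
    calc LL lam * j + η < LL lam * j + LL lam := add_lt_add_right hη _
      _ = LL lam * (j + 1) := by rw [mul_add, mul_one]
  have hmemlt : ∀ j, ∀ η, η < LL lam → Dfun j η < αj j := by
    intro j η hη
    have hη1 : η + 1 < LL lam := (LL_isLimit hlam).succ_lt hη
    calc Dfun j η < Dfun j (η + 1) := hEmono (add_lt_add_right (lt_add_one_ord η) _)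
      _ ≤ αj j := le_csSup (hDbdd j) ⟨η + 1, hη1, rfl⟩
  have hDne : ∀ j, (Dset j).Nonempty := fun j => ⟨Dfun j 0, 0, LL_pos hlam, rfl⟩
  have hαmono : ∀ j j', j < j' → j' < ν.ord → αj j < αj j' := by
    intro j j' hjj' hj'
    have h1 : αj j ≤ E (LL lam * (j + 1)) := by
      apply csSup_le'
      rintro x ⟨η, hη, rfl⟩
      apply le_of_lt (hEmono _)
      calc LL lam * j + η < LL lam * j + LL lam := add_lt_add_right hη _
        _ = LL lam * (j + 1) := by rw [mul_add, mul_one]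
    have h2 : E (LL lam * (j + 1)) ≤ E (LL lam * j') := by
      apply hEmono.monotone
      apply mul_le_mul_right
      rw [Ordinal.add_one_eq_succ, Order.succ_le_iff]
      exact hjj'
    have h3 : E (LL lam * j') < αj j' := by
      have h := hmemlt j' 0 (LL_pos hlam)
      simpa [hDfun] using h
    exact lt_of_le_of_lt (h1.trans h2) h3
  have hthin : ∀ j, ∀ δ, δ < αj j → Cardinal.mk ↥(Dset j ∩ Iio δ) < Cardinal.lift.{1} lam := by
    intro j δ hδ
    obtain ⟨x, hx, hδx⟩ := exists_lt_of_lt_csSup (hDne j) hδ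
    obtain ⟨η₀, hη₀, rfl⟩ := hx
    have hsub : Dset j ∩ Iio δ ⊆ Dfun j '' Iio η₀ := by
      rintro x ⟨⟨η, hη, rfl⟩, hxδ⟩
      refine ⟨η, ?_, rfl⟩
      rw [mem_Iio]
      have := hEmono.lt_iff_lt.1 (lt_trans (mem_Iio.1 hxδ) hδx)
      exact (add_lt_add_iff_left (LL lam * j)).1 this
    calc Cardinal.mk ↥(Dset j ∩ Iio δ) ≤ Cardinal.mk ↥(Dfun j '' Iio η₀) :=
          Cardinal.mk_le_mk_of_subset hsub
      _ ≤ Cardinal.mk (Iio η₀) := Cardinal.mk_image_le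
      _ < Cardinal.lift.{1} lam := mk_Iio_lt_lift hη₀
  have hmkD : ∀ j, j < ν.ord → Cardinal.mk (Dset j) = Cardinal.lift.{1} lam := by
    intro j hj
    have hinj : Set.InjOn (Dfun j) (Iio (LL lam)) := by
      intro a _ b _ hab
      exact (add_right_inj (LL lam * j)).1 (hEmono.injective hab)
    rw [hDset]
    rw [Cardinal.mk_image_eq_of_injOn _ _ hinj, Cardinal.mk_Iio_ordinal, card_LL]
  -- the point where we apply the covering
  set αstar : Ordinal.{0} := E (LL lam * ν.ord) + 1 with hαstar
  have hαstarko : αstar < ko lam := (ko_isLimit hlam).succ_lt (claim _ htopidx).2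
  have hDαstar : ∀ j, j < ν.ord → Dset j ⊆ Δ ∩ Iio αstar := by
    rintro j hj x ⟨η, hη, rfl⟩
    exact ⟨hDΔ j hj η hη, lt_trans (hDidx j hj η hη) (lt_add_one_ord _)⟩
  have hbα := hb αstar hαstarko
  have hbmk : Cardinal.mk (b αstar) = Cardinal.lift.{1} χ := hbα.2
  have hbko : b αstar ⊆ Iio (ko lam) := hbα.1
  have hUcov := hcov αstar hαstarko
  -- pigeonhole
  have hpig : ∀ j, j < ν.ord → ∃ β, β ∈ b αstar ∧
      ¬ (Cardinal.mk ↥(seqC lam sur fs β ∩ Dset j) < Cardinal.lift.{1} lam) := by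
    intro j hj
    by_contra hno
    push_neg at hno
    have hcover : Dset j ⊆ ⋃ (β : ↥(b αstar)), (seqC lam sur fs (β : Ordinal.{0}) ∩ Dset j) := by
      intro x hx
      have := hUcov (hDαstar j hj hx)
      rw [mem_iUnion₂] at this
      obtain ⟨β, hβ, hmem⟩ := this
      exact mem_iUnion.2 ⟨⟨β, hβ⟩, hmem, hx⟩
    have hcof1 : Cardinal.mk (b αstar) < (Cardinal.lift.{1} lam).ord.cof := by
      rw [hbmk, ← Cardinal.lift_ord, ← Ordinal.lift_cof]
      show Cardinal.lift.{1} χ < Cardinal.lift.{1,0} (LL lam).cof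
      exact Cardinal.lift_lt.2 hlt
    have hsup : (⨆ (β : ↥(b αstar)), Cardinal.mk ↥(seqC lam sur fs (β : Ordinal.{0}) ∩ Dset j))
        < Cardinal.lift.{1} lam :=
      Ordinal.iSup_lt hcof1 (fun β => hno β β.2)
    have h1 : Cardinal.mk (Dset j) < Cardinal.lift.{1} lam := by
      calc Cardinal.mk (Dset j)
          ≤ Cardinal.mk ↥(⋃ (β : ↥(b αstar)), (seqC lam sur fs (β : Ordinal.{0}) ∩ Dset j)) :=
            Cardinal.mk_le_mk_of_subset hcover
        _ ≤ Cardinal.mk (b αstar) *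
              ⨆ (β : ↥(b αstar)), Cardinal.mk ↥(seqC lam sur fs (β : Ordinal.{0}) ∩ Dset j) :=
            Cardinal.mk_iUnion_le _
        _ < Cardinal.lift.{1} lam := by
            apply Cardinal.mul_lt_of_lt (lift_aleph0_le hlam)
            · rw [hbmk, Cardinal.lift_lt]
              exact lt_of_lt_of_le hlt cof_LL_le
            · exact hsup
    rw [hmkD j hj] at h1
    exact absurd h1 (lt_irrefl _)
  have H : ∀ j : ↥(Iio ν.ord), ∃ β, β ∈ b αstar ∧
      ¬ (Cardinal.mk ↥(seqC lam sur fs β ∩ Dset (j : Ordinal.{0})) < Cardinal.lift.{1} lam) :=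
    fun j => hpig j j.2
  choose g hg1 hg2 using H
  -- each g j has club with supremum exactly αj j
  have hgko : ∀ j, g j < ko lam := fun j => hbko (hg1 j)
  have hsupC : ∀ j : ↥(Iio ν.ord), sSup (seqC lam sur fs (g j)) = αj (j : Ordinal.{0}) := by
    intro j
    have hseqsub : seqC lam sur fs (g j) ⊆ Iio (g j) :=
      (seqC_isCSeq hlam hfs (g j) (hgko j)).1
    apply le_antisymm
    · by_contra hgt
      push_neg at hgt
      have hinv := seqC_inv hlam hfs hsur (hgko j) hgt
      have hsub : seqC lam sur fs (g j) ∩ Dset (j : Ordinal.{0}) ⊆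
          seqC lam sur fs (g j) ∩ Iio (αj (j : Ordinal.{0})) := by
        rintro x ⟨hx1, η, hη, rfl⟩
        exact ⟨hx1, hmemlt _ η hη⟩
      exact absurd (lt_of_le_of_lt (Cardinal.mk_le_mk_of_subset hsub) hinv) (hg2 j)
    · by_contra hgt
      push_neg at hgt
      obtain ⟨y, hy, hsy⟩ := exists_lt_of_lt_csSup (hDne _) hgt
      obtain ⟨η₁, hη₁, rfl⟩ := hy
      have hδ' : sSup (seqC lam sur fs (g j)) + 1 < αj (j : Ordinal.{0}) :=
        lt_of_le_of_lt (by rw [Ordinal.add_one_eq_succ, Order.succ_le_iff]; exact hsy)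
          (hmemlt _ η₁ hη₁)
      have hthin' := hthin _ _ hδ'
      have hsub : seqC lam sur fs (g j) ∩ Dset (j : Ordinal.{0}) ⊆
          Dset (j : Ordinal.{0}) ∩ Iio (sSup (seqC lam sur fs (g j)) + 1) := by
        rintro x ⟨hx1, hx2⟩
        refine ⟨hx2, mem_Iio.2 (lt_of_le_of_lt ?_ (lt_add_one_ord _))⟩
        exact le_csSup (bddAbove_of_subset_Iio hseqsub) hx1
      exact absurd (lt_of_le_of_lt (Cardinal.mk_le_mk_of_subset hsub) hthin') (hg2 j)
  -- injectivity gives the contradiction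
  have hginj : Function.Injective (fun j : ↥(Iio ν.ord) => (⟨g j, hg1 j⟩ : ↥(b αstar))) := by
    intro j j' hjj'
    have hval : g j = g j' := congrArg Subtype.val hjj'
    have hα : αj (j : Ordinal.{0}) = αj (j' : Ordinal.{0}) := by
      rw [← hsupC j, ← hsupC j', hval]
    apply Subtype.ext
    by_contra hne
    rcases lt_or_gt_of_ne hne with h | h
    · exact absurd hα (ne_of_lt (hαmono _ _ h j'.2))
    · exact absurd hα.symm (ne_of_lt (hαmono _ _ h j.2))
  have hfinal : Cardinal.lift.{1} ν ≤ Cardinal.lift.{1} χ := by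
    calc Cardinal.lift.{1} ν = Cardinal.lift.{1} ν.ord.card := by rw [Cardinal.card_ord]
      _ = Cardinal.mk (Iio ν.ord) := (Cardinal.mk_Iio_ordinal _).symm
      _ ≤ Cardinal.mk (b αstar) := Cardinal.mk_le_of_injective hginj
      _ = Cardinal.lift.{1} χ := hbmk
  rw [Cardinal.lift_le] at hfinal
  exact absurd (lt_of_lt_of_le (Order.lt_succ χ) hfinal) (lt_irrefl _)

end Lower
theorem statement12 (lam : Cardinal.{0}) (hlam : Cardinal.aleph0 ≤ lam) :
    (∃ C, IsCSeq (Order.succ lam).ord C ∧ chiOf (Order.succ lam) C = lam.ord.cof) ∧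
    lam.ord.cof ∈ spec (Order.succ lam) := by
  obtain ⟨fs, hfs'⟩ := exists_fs
  obtain ⟨sur, hsur'⟩ := exists_sur hlam
  have hfs : HFS fs := hfs'
  have hsur : HSUR lam sur := hsur'
  have hcseq : IsCSeq (Order.succ lam).ord (seqC lam sur fs) := seqC_isCSeq hlam hfs
  have hchi : chiOf (Order.succ lam) (seqC lam sur fs) = lam.ord.cof := by
    rw [chiOf, chiOfOn]
    have hmem : lam.ord.cof ∈ {χ : Cardinal.{0} | χ ≤ Order.succ lam ∧
        CSeqCovers (Order.succ lam) (Iio (Order.succ lam).ord) (seqC lam sur fs) χ} :=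
      ⟨le_trans cof_LL_le (Order.le_succ lam), covers hlam hfs hsur⟩
    apply le_antisymm (csInf_le' hmem)
    apply le_csInf ⟨_, hmem⟩
    intro χ hχ
    exact lower_bound hlam hfs hsur hχ.2
  refine ⟨⟨seqC lam sur fs, hcseq, hchi⟩, ?_, seqC lam sur fs, hcseq, hchi⟩
  exact Ordinal.aleph0_le_cof.2 (Cardinal.isSuccLimit_ord hlam)

end CSeq
end
end
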